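/- arXiv:2301.13424 — 3 statements merged into one kernel-verified Lean document; each statement's English description precedes it below -/
import Mathlib

section
/- Assume μ satisfies Assumption (A) and let K be a nonempty compact subset of Ω⁻. Then there exists a constant c > 0 such that for all z ∈ K and all sufficiently large n, the probability that log|p_n(z)| > −log 2 is at most e^{−cn}. -/
open MeasureTheory ProbabilityTheory Filter Metric

/-- Logarithmic potential of a measure on ℂ. -/
noncomputable def logPot (μ : Measure ℂ) (z : ℂ) : ℝ :=
  ∫ w, Real.log ‖z - w‖ ∂μ

/-- Topological support of a measure on ℂ. -/
def msupport (μ : Measure ℂ) : Set ℂ :=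
  {x : ℂ | ∀ U ∈ nhds x, 0 < μ U}

/-- Assumption (A): for every compact `K`, `sup_{z ∈ K} ∫ (log|z-w|)² dμ(w) < ∞`. -/
def AssumptionA (μ : Measure ℂ) : Prop :=
  ∀ K : Set ℂ, IsCompact K → ∃ C : ℝ, ∀ z ∈ K,
    ∫⁻ w, ENNReal.ofReal ((Real.log ‖z - w‖) ^ 2) ∂μ ≤ ENNReal.ofReal C

/-- Assumption (D): `μ(B(z,r)) ≤ C rᵉ` for all `z` and `r > 0`. -/
def AssumptionD (μ : Measure ℂ) : Prop :=
  ∃ C : ℝ, ∃ ε : ℝ, 0 < ε ∧ ∀ z : ℂ, ∀ r : ℝ, 0 < r →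
    μ (Metric.ball z r) ≤ ENNReal.ofReal (C * r ^ ε)

/-- The filled unit lemniscate of `p_n(z) = ∏_{k<n} (z - X k ω)`. -/
def lemniscate {Ω : Type*} (X : ℕ → Ω → ℂ) (n : ℕ) (ω : Ω) : Set ℂ :=
  {z : ℂ | ‖∏ k ∈ Finset.range n, (z - X k ω)‖ < 1}

/-- Inradius of a planar set: the sup of radii of open disks contained in it (0 if none). -/
noncomputable def inradius (U : Set ℂ) : ℝ :=
  sSup {r : ℝ | 0 < r ∧ ∃ c : ℂ, Metric.ball c r ⊆ U}

noncomputable def lf (z w : ℂ) : ℝ := Real.log ‖z - w‖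
noncomputable def trc (T : ℝ) (z w : ℂ) : ℝ := max (lf z w) (-T)

lemma lf_meas (z : ℂ) : Measurable (fun w => lf z w) := by
  apply Real.measurable_log.comp
  exact (continuous_norm.comp (continuous_const.sub continuous_id)).measurable

lemma trc_meas (T : ℝ) (z : ℂ) : Measurable (fun w => trc T z w) :=
  (lf_meas z).max measurable_const

lemma lf_le_trc (T : ℝ) (z w : ℂ) : lf z w ≤ trc T z w := le_max_left _ _

lemma trc_anti {T₁ T₂ : ℝ} (h : T₁ ≤ T₂) (z w : ℂ) : trc T₂ z w ≤ trc T₁ z w :=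
  max_le_max le_rfl (by linarith)

lemma abs_trc_le (T : ℝ) (hT : 0 ≤ T) (z w : ℂ) : |trc T z w| ≤ T + |lf z w| := by
  rw [abs_le]
  refine ⟨le_trans (by linarith [abs_nonneg (lf z w)]) (le_max_right _ _), ?_⟩
  have h1 : lf z w ≤ T + |lf z w| := le_trans (le_abs_self _) (by linarith [abs_nonneg (lf z w)])
  exact max_le h1 (by linarith [abs_nonneg (lf z w)])

lemma trc_sq_le (T : ℝ) (z w : ℂ) : (trc T z w)^2 ≤ (lf z w)^2 + T^2 := by
  unfold trc
  rcases le_total (lf z w) (-T) with h | h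
  · rw [max_eq_right h]; nlinarith [sq_nonneg (lf z w)]
  · rw [max_eq_left h]; nlinarith [sq_nonneg T]

lemma trc_sub_le (T : ℝ) (hT : 0 < T) (z w : ℂ) : trc T z w - lf z w ≤ (lf z w)^2 / T := by
  unfold trc
  rcases le_total (lf z w) (-T) with h | h
  · rw [max_eq_right h]
    rw [le_div_iff₀ hT]
    nlinarith [sq_nonneg (lf z w + T)]
  · rw [max_eq_left h]
    have : 0 ≤ (lf z w)^2 / T := by positivity
    linarith

lemma exp_le_one_add_add_sq {u : ℝ} (hu : u ≤ 1) : Real.exp u ≤ 1 + u + u^2 := by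
  rcases le_total (-1) u with h | h
  · have hb := Real.exp_bound (n := 2) (by rw [abs_le]; exact ⟨h, hu⟩) (by norm_num)
    simp [Finset.sum_range_succ] at hb
    rw [abs_le] at hb
    have := hb.2
    have h2 : |u|^2 = u^2 := sq_abs u
    nlinarith [sq_nonneg u]
  · have h1 : Real.exp u ≤ 1 := Real.exp_le_one_iff.mpr (by linarith)
    nlinarith

lemma msupport_compl_null (μ : Measure ℂ) : μ (msupport μ)ᶜ = 0 := by
  apply measure_null_of_locally_null
  intro x hx
  simp only [msupport, Set.mem_compl_iff, Set.mem_setOf_eq, not_forall] at hx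
  obtain ⟨U, hU, hU0⟩ := hx
  exact ⟨U, mem_nhdsWithin_of_mem_nhds hU, by simpa using hU0⟩

lemma noAtoms (μ : Measure ℂ) [IsProbabilityMeasure μ] (hA : AssumptionA μ) (x : ℂ) :
    μ {x} = 0 := by
  by_contra hm
  obtain ⟨C, hC⟩ := hA (Metric.closedBall x 1) (isCompact_closedBall x 1)
  set m := (μ {x}).toReal with hmdef
  have hfin : μ {x} ≠ ⊤ := measure_ne_top μ _
  have hm0 : 0 < m := ENNReal.toReal_pos hm hfin
  set a : ℝ := max C 0 / m + 1 with ha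
  have ha1 : 1 ≤ a := by
    have h0 : 0 ≤ max C 0 / m := by positivity
    rw [ha]; linarith
  set t : ℝ := Real.exp (-a) with ht
  have ht0 : 0 < t := Real.exp_pos _
  have ht1 : t ≤ 1 := Real.exp_le_one_iff.mpr (by linarith)
  set z : ℂ := x + (t : ℂ) with hz
  have hzmem : z ∈ Metric.closedBall x 1 := by
    rw [Metric.mem_closedBall, dist_eq_norm]
    simp [hz, Complex.norm_real, abs_of_pos ht0, ht1]
  have hlf : Real.log (‖z - x‖) = -a := by
    have : z - x = (t : ℂ) := by rw [hz]; ring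
    rw [this, Complex.norm_real, Real.norm_eq_abs, abs_of_pos ht0, ht, Real.log_exp]
  have key : ENNReal.ofReal (a ^ 2) * μ {x} ≤ ENNReal.ofReal (max C 0) := by
    calc ENNReal.ofReal (a ^ 2) * μ {x}
        = ∫⁻ w in {x}, ENNReal.ofReal ((Real.log (‖z - w‖)) ^ 2) ∂μ := by
          rw [lintegral_singleton]
          rw [hlf]; ring_nf
      _ ≤ ∫⁻ w, ENNReal.ofReal ((Real.log (‖z - w‖)) ^ 2) ∂μ :=
          setLIntegral_le_lintegral _ _
      _ ≤ ENNReal.ofReal C := hC z hzmem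
      _ ≤ ENNReal.ofReal (max C 0) := ENNReal.ofReal_le_ofReal (le_max_left _ _)
  have key2 : a ^ 2 * m ≤ max C 0 := by
    have h1 : (ENNReal.ofReal (a ^ 2) * μ {x}).toReal ≤ max C 0 :=
      ENNReal.toReal_le_of_le_ofReal (le_max_right _ _) key
    rwa [ENNReal.toReal_mul, ENNReal.toReal_ofReal (by positivity)] at h1
  have hlt : max C 0 < a * m := by
    have : a * m = max C 0 + m := by rw [ha]; field_simp
    linarith
  have hsq : 0 ≤ a * m * (a - 1) := mul_nonneg (mul_nonneg (by linarith) hm0.le) (by linarith)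
  nlinarith

lemma sq_integrable (μ : Measure ℂ) (z : ℂ) (C : ℝ)
    (h : ∫⁻ w, ENNReal.ofReal ((lf z w) ^ 2) ∂μ ≤ ENNReal.ofReal C) :
    Integrable (fun w => (lf z w) ^ 2) μ ∧ ∫ w, (lf z w) ^ 2 ∂μ ≤ max C 0 := by
  have hmeas : Measurable (fun w => (lf z w) ^ 2) := (lf_meas z).pow_const 2
  have hlt : ∫⁻ w, ENNReal.ofReal ((lf z w) ^ 2) ∂μ < ⊤ :=
    lt_of_le_of_lt h ENNReal.ofReal_lt_top
  have hint : Integrable (fun w => (lf z w) ^ 2) μ := by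
    refine ⟨hmeas.aestronglyMeasurable, ?_⟩
    rw [hasFiniteIntegral_iff_ofReal (Filter.Eventually.of_forall fun w => sq_nonneg _)]
    exact hlt
  refine ⟨hint, ?_⟩
  rw [integral_eq_lintegral_of_nonneg_ae (Filter.Eventually.of_forall fun w => sq_nonneg _)
    hmeas.aestronglyMeasurable]
  exact ENNReal.toReal_le_of_le_ofReal (le_max_right _ _)
    (le_trans h (ENNReal.ofReal_le_ofReal (le_max_left _ _)))

lemma lf_integrable (μ : Measure ℂ) [IsFiniteMeasure μ] (z : ℂ)
    (hsq : Integrable (fun w => (lf z w) ^ 2) μ) :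
    Integrable (fun w => lf z w) μ := by
  refine Integrable.mono' ((integrable_const (1:ℝ)).add hsq) (lf_meas z).aestronglyMeasurable
    (Filter.Eventually.of_forall fun w => ?_)
  have : |lf z w| ≤ 1 + (lf z w) ^ 2 := by nlinarith [sq_abs (lf z w), sq_nonneg (|lf z w| - 1)]
  simpa using this

lemma trc_integrable (μ : Measure ℂ) [IsFiniteMeasure μ] (T : ℝ) (hT : 0 ≤ T) (z : ℂ)
    (hlf : Integrable (fun w => lf z w) μ) :
    Integrable (fun w => trc T z w) μ :=
  Integrable.mono' ((integrable_const T).add hlf.abs) (trc_meas T z).aestronglyMeasurable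
    (Filter.Eventually.of_forall fun w => by simpa using abs_trc_le T hT z w)

lemma trc_sq_integrable (μ : Measure ℂ) [IsFiniteMeasure μ] (T : ℝ) (z : ℂ)
    (hsq : Integrable (fun w => (lf z w) ^ 2) μ) :
    Integrable (fun w => (trc T z w) ^ 2) μ :=
  Integrable.mono' (hsq.add (integrable_const (T^2)))
    ((trc_meas T z).pow_const 2).aestronglyMeasurable
    (Filter.Eventually.of_forall fun w => by
      rw [Real.norm_eq_abs, abs_of_nonneg (sq_nonneg _)]; exact trc_sq_le T z w)

/-- The mgf bound for a single truncated variable. -/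
lemma mgf_bound (μ : Measure ℂ) [IsProbabilityMeasure μ] (T M lam del C : ℝ) (z : ℂ)
    (hT : 1 ≤ T) (hM : 1 ≤ M) (hlam : 0 < lam) (hlamM : lam * M ≤ 1)
    (hlam2 : lam * (C + T ^ 2) ≤ del / 2)
    (hsq : Integrable (fun w => (lf z w) ^ 2) μ)
    (hlf : Integrable (fun w => lf z w) μ)
    (hC : ∫ w, (lf z w) ^ 2 ∂μ ≤ C)
    (hmean : ∫ w, trc T z w ∂μ ≤ -del)
    (hae : ∀ᵐ w ∂μ, lf z w ≤ M) :
    ∫ w, Real.exp (lam * trc T z w) ∂μ ≤ Real.exp (-(lam * del) / 2) := by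
  have hT0 : (0:ℝ) ≤ T := by linarith
  have htrc_int := trc_integrable μ T hT0 z hlf
  have htrcsq_int := trc_sq_integrable μ T z hsq
  have haetrc : ∀ᵐ w ∂μ, trc T z w ≤ M := by
    filter_upwards [hae] with w hw
    exact max_le hw (by linarith)
  -- integrability of exp
  have hexp_int : Integrable (fun w => Real.exp (lam * trc T z w)) μ := by
    refine Integrable.mono' (integrable_const (Real.exp (lam * M)))
      (((trc_meas T z).const_mul lam).exp).aestronglyMeasurable ?_
    filter_upwards [haetrc] with w hw
    rw [Real.norm_eq_abs, abs_of_pos (Real.exp_pos _)]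
    exact Real.exp_le_exp.mpr (mul_le_mul_of_nonneg_left hw hlam.le)
  -- pointwise bound
  have hptwise : ∀ᵐ w ∂μ, Real.exp (lam * trc T z w) ≤
      1 + lam * trc T z w + lam ^ 2 * ((lf z w) ^ 2 + T ^ 2) := by
    filter_upwards [haetrc] with w hw
    have hu : lam * trc T z w ≤ 1 :=
      le_trans (mul_le_mul_of_nonneg_left hw hlam.le) hlamM
    refine le_trans (exp_le_one_add_add_sq hu) ?_
    have h2 : (lam * trc T z w) ^ 2 ≤ lam ^ 2 * ((lf z w) ^ 2 + T ^ 2) := by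
      rw [mul_pow]
      exact mul_le_mul_of_nonneg_left (trc_sq_le T z w) (sq_nonneg _)
    linarith
  have hrhs_int : Integrable
      (fun w => 1 + lam * trc T z w + lam ^ 2 * ((lf z w) ^ 2 + T ^ 2)) μ := by
    exact ((integrable_const (1:ℝ)).add (htrc_int.const_mul lam)).add
      ((hsq.add (integrable_const (T^2))).const_mul (lam ^ 2))
  have hint_le := integral_mono_ae hexp_int hrhs_int hptwise
  have hC0 : 0 ≤ C := le_trans (integral_nonneg fun w => sq_nonneg _) hC
  have hA1 : Integrable (fun w => 1 + lam * trc T z w) μ := by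
    exact (integrable_const (1:ℝ)).add (htrc_int.const_mul lam)
  have hB1 : Integrable (fun w => lam ^ 2 * ((lf z w) ^ 2 + T ^ 2)) μ := by
    exact (hsq.add (integrable_const (T^2))).const_mul (lam ^ 2)
  have hB2 : Integrable (fun w => (lf z w) ^ 2 + T ^ 2) μ := by
    exact hsq.add (integrable_const (T^2))
  have e1 : ∫ w, (1 + lam * trc T z w + lam ^ 2 * ((lf z w) ^ 2 + T ^ 2)) ∂μ
      = 1 + lam * (∫ w, trc T z w ∂μ) + lam ^ 2 * ((∫ w, (lf z w) ^ 2 ∂μ) + T ^ 2) := by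
    rw [integral_add hA1 hB1, integral_add (integrable_const (1:ℝ)) (htrc_int.const_mul lam),
      integral_const, integral_const_mul, integral_const_mul, integral_add hsq
      (integrable_const (T^2)), integral_const]
    simp [measure_univ]
  have hcomp : ∫ w, (1 + lam * trc T z w + lam ^ 2 * ((lf z w) ^ 2 + T ^ 2)) ∂μ
      ≤ 1 - lam * del / 2 := by
    rw [e1]
    have h1 : lam * ∫ w, trc T z w ∂μ ≤ lam * (-del) :=
      mul_le_mul_of_nonneg_left hmean hlam.le
    have h2 : lam ^ 2 * (∫ w, (lf z w) ^ 2 ∂μ + T ^ 2) ≤ lam * (lam * (C + T ^ 2)) := by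
      rw [sq, mul_assoc]
      refine mul_le_mul_of_nonneg_left (mul_le_mul_of_nonneg_left ?_ hlam.le) hlam.le
      linarith
    have h3 : lam * (lam * (C + T ^ 2)) ≤ lam * (del / 2) :=
      mul_le_mul_of_nonneg_left hlam2 hlam.le
    nlinarith
  refine le_trans hint_le (le_trans hcomp ?_)
  have := Real.add_one_le_exp (-(lam * del) / 2)
  linarith

-- growth bound
lemma lf_growth {z z₀ : ℂ} (w : ℂ) (hz : dist z z₀ < 1) :
    max (lf z w) 0 ≤ Real.log 2 + |lf z₀ w| := by
  have hlog2 : 0 ≤ Real.log 2 := Real.log_nonneg one_le_two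
  have habs : 0 ≤ |lf z₀ w| := abs_nonneg _
  refine max_le ?_ (by linarith)
  set a := ‖z - w‖ with ha
  set b := ‖z₀ - w‖ with hb
  have hab : a ≤ b + 1 := by
    calc a = ‖(z - z₀) + (z₀ - w)‖ := by rw [ha]; ring_nf
    _ ≤ ‖z - z₀‖ + b := norm_add_le _ _
    _ ≤ b + 1 := by
        have : ‖z - z₀‖ < 1 := by
          rw [Complex.dist_eq] at hz; exact hz
        linarith
  rcases eq_or_lt_of_le (norm_nonneg (z - w)) with h0 | h0
  · show Real.log a ≤ _
    rw [ha, ← h0, Real.log_zero]; linarith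
  rcases le_total b 1 with hb1 | hb1
  · have : Real.log a ≤ Real.log 2 := Real.log_le_log h0 (by linarith)
    show Real.log a ≤ _; linarith
  · have hb0 : 0 < b := by linarith
    have : Real.log a ≤ Real.log (2 * b) := Real.log_le_log h0 (by linarith)
    rw [Real.log_mul two_ne_zero hb0.ne'] at this
    have hlb : Real.log b ≤ |lf z₀ w| := le_abs_self _
    show Real.log a ≤ _
    have : lf z₀ w = Real.log b := rfl
    linarith [le_abs_self (lf z₀ w)]

lemma abs_trc_le' (T : ℝ) (hT : 0 ≤ T) (z w : ℂ) : |trc T z w| ≤ T + max (lf z w) 0 := by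
  rw [abs_le]
  constructor
  · have : -T ≤ trc T z w := le_max_right _ _
    have h0 : 0 ≤ max (lf z w) 0 := le_max_right _ _
    linarith
  · exact max_le (le_trans (le_max_left _ _) (by linarith)) (by linarith [le_max_right (lf z w) 0])

lemma local_bound (μ : Measure ℂ) [IsProbabilityMeasure μ]
    (hatom : ∀ x : ℂ, μ {x} = 0) (z₀ : ℂ)
    (hlf : Integrable (fun w => lf z₀ w) μ)
    (hsq : Integrable (fun w => (lf z₀ w) ^ 2) μ)
    (hneg : ∫ w, lf z₀ w ∂μ < 0) :
    ∃ T : ℝ, 1 ≤ T ∧ ∃ r > (0:ℝ), ∃ ε > (0:ℝ),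
      ∀ z ∈ ball z₀ r, ∫ w, trc T z w ∂μ ≤ -ε := by
  set ε₀ : ℝ := -∫ w, lf z₀ w ∂μ with hε₀
  have hε₀pos : 0 < ε₀ := by simp only [hε₀]; linarith
  set C₀ : ℝ := ∫ w, (lf z₀ w) ^ 2 ∂μ with hC₀
  have hC₀0 : 0 ≤ C₀ := integral_nonneg fun w => sq_nonneg _
  set T₀ : ℝ := max 1 (2 * (C₀ + 1) / ε₀) with hT₀
  have hT₀1 : 1 ≤ T₀ := le_max_left _ _
  have hT₀pos : 0 < T₀ := by linarith
  have htrcint := trc_integrable μ T₀ (by linarith) z₀ hlf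
  -- step 1 : value at z₀
  have hval : ∫ w, trc T₀ z₀ w ∂μ ≤ -ε₀ / 2 := by
    have h1 : ∫ w, (trc T₀ z₀ w - lf z₀ w) ∂μ ≤ ∫ w, (lf z₀ w) ^ 2 / T₀ ∂μ :=
      integral_mono (htrcint.sub hlf) (hsq.div_const T₀)
        (fun w => trc_sub_le T₀ hT₀pos z₀ w)
    rw [integral_sub htrcint hlf, integral_div] at h1
    have h2 : C₀ / T₀ ≤ ε₀ / 2 := by
      rw [div_le_div_iff₀ hT₀pos (by norm_num : (0:ℝ) < 2)]
      have h3 : 2 * (C₀ + 1) / ε₀ ≤ T₀ := le_max_right _ _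
      have h4 : 2 * (C₀ + 1) ≤ ε₀ * T₀ := by
        rw [← div_le_iff₀' hε₀pos]; exact h3
      nlinarith
    simp only [hε₀] at *
    linarith
  -- step 2 : continuity
  have hcont : ContinuousAt (fun z => ∫ w, trc T₀ z w ∂μ) z₀ := by
    apply continuousAt_of_dominated (bound := fun w => T₀ + (Real.log 2 + |lf z₀ w|))
    · exact Filter.Eventually.of_forall fun z => (trc_meas T₀ z).aestronglyMeasurable
    · filter_upwards [Metric.ball_mem_nhds z₀ one_pos] with z hz
      refine Filter.Eventually.of_forall fun w => ?_
      rw [Real.norm_eq_abs]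
      have := abs_trc_le' T₀ (by linarith) z w
      have := lf_growth (z := z) (z₀ := z₀) w (by rwa [Metric.mem_ball] at hz)
      linarith
    · exact (integrable_const T₀).add ((integrable_const (Real.log 2)).add hlf.abs)
    · have hne : ∀ᵐ w ∂μ, w ≠ z₀ := by
        rw [ae_iff]
        convert hatom z₀ using 2
        ext w; simp
      filter_upwards [hne] with w hw
      have h1a : ContinuousAt (fun z : ℂ => z - w) z₀ :=
        (continuous_id.sub continuous_const).continuousAt
      have h1b : ContinuousAt (fun x : ℂ => ‖x‖) (z₀ - w) := continuous_norm.continuousAt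
      have h2 : ‖z₀ - w‖ ≠ 0 := by
        simpa [sub_eq_zero] using (Ne.symm hw)
      have h1 : ContinuousAt (fun z : ℂ => ‖z - w‖) z₀ :=
        ContinuousAt.comp h1b h1a
      have h3 : ContinuousAt (fun z : ℂ => Real.log (‖z - w‖)) z₀ :=
        ContinuousAt.comp (g := Real.log) (f := fun z : ℂ => ‖z - w‖)
          (Real.continuousAt_log h2) h1
      exact h3.max continuousAt_const
  -- step 3 : extract ball
  have hmem : (fun z => ∫ w, trc T₀ z w ∂μ) ⁻¹' Set.Iio (-ε₀ / 4) ∈ nhds z₀ :=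
    hcont (Iio_mem_nhds (by linarith))
  obtain ⟨r, hr0, hball⟩ := Metric.mem_nhds_iff.mp hmem
  refine ⟨T₀, hT₀1, r, hr0, ε₀ / 4, by linarith, fun z hz => ?_⟩
  have := hball hz
  simp only [Set.mem_preimage, Set.mem_Iio] at this
  linarith

lemma key1 (μ : Measure ℂ) [IsProbabilityMeasure μ]
    (hatom : ∀ x : ℂ, μ {x} = 0) (K : Set ℂ) (hK : IsCompact K) (hKne : K.Nonempty)
    (hint : ∀ z ∈ K, Integrable (fun w => lf z w) μ)
    (hsq : ∀ z ∈ K, Integrable (fun w => (lf z w) ^ 2) μ)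
    (hneg : ∀ z ∈ K, ∫ w, lf z w ∂μ < 0) :
    ∃ T : ℝ, 1 ≤ T ∧ ∃ δ > (0:ℝ), ∀ z ∈ K, ∫ w, trc T z w ∂μ ≤ -δ := by
  have hloc : ∀ z₀ : K, ∃ T : ℝ, 1 ≤ T ∧ ∃ r > (0:ℝ), ∃ ε > (0:ℝ),
      ∀ z ∈ ball (z₀ : ℂ) r, ∫ w, trc T z w ∂μ ≤ -ε :=
    fun z₀ => local_bound μ hatom z₀ (hint _ z₀.2) (hsq _ z₀.2) (hneg _ z₀.2)
  choose T hT1 r hr ε hε H using hloc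
  have hcover : K ⊆ ⋃ i : K, ball (i : ℂ) (r i) := fun z hz =>
    Set.mem_iUnion.mpr ⟨⟨z, hz⟩, mem_ball_self (hr _)⟩
  obtain ⟨t, ht⟩ := hK.elim_finite_subcover (fun i : K => ball (i : ℂ) (r i))
    (fun i => isOpen_ball) hcover
  have htne : t.Nonempty := by
    obtain ⟨z, hz⟩ := hKne
    obtain ⟨i, hi⟩ := Set.mem_iUnion₂.mp (ht hz)
    exact ⟨i, hi.1⟩
  refine ⟨t.sup' htne T, ?_, t.inf' htne ε, ?_, ?_⟩
  · obtain ⟨i, hi⟩ := htne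
    exact le_trans (hT1 i) (Finset.le_sup' T hi)
  · exact (Finset.lt_inf'_iff htne).mpr fun i _ => hε i
  · intro z hz
    obtain ⟨i, hit, hmem⟩ := Set.mem_iUnion₂.mp (ht hz)
    have hTi : T i ≤ t.sup' htne T := Finset.le_sup' T hit
    have hsup0 : (0:ℝ) ≤ t.sup' htne T := by
      obtain ⟨j, hj⟩ := htne
      linarith [hT1 j, Finset.le_sup' T hj]
    have h1 : ∫ w, trc (t.sup' htne T) z w ∂μ ≤ ∫ w, trc (T i) z w ∂μ :=
      integral_mono (trc_integrable μ _ hsup0 z (hint z hz))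
        (trc_integrable μ _ (by linarith [hT1 i]) z (hint z hz))
        (fun w => trc_anti hTi z w)
    have h2 := H i z hmem
    have h3 : t.inf' htne ε ≤ ε i := Finset.inf'_le ε hit
    linarith

theorem statement12
    {Ω : Type*} [MeasurableSpace Ω] (P : Measure Ω) [IsProbabilityMeasure P]
    (μ : Measure ℂ) [IsProbabilityMeasure μ] (hS : IsCompact (msupport μ))
    (hA : AssumptionA μ)
    (X : ℕ → Ω → ℂ) (hmeas : ∀ i, Measurable (X i))
    (hid : ∀ i, Measure.map (X i) P = μ)
    (hindep : iIndepFun X P)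
    (K : Set ℂ) (hK : IsCompact K) (hKne : K.Nonempty)
    (hKsub : K ⊆ {z : ℂ | logPot μ z < 0}) :
    ∃ c > (0 : ℝ), ∀ z ∈ K, ∀ᶠ n : ℕ in atTop,
      P {ω | -Real.log 2 <
          Real.log ‖∏ k ∈ Finset.range n, (z - X k ω)‖} ≤
        ENNReal.ofReal (Real.exp (-c * n)) := by
  have hatom : ∀ x : ℂ, μ {x} = 0 := noAtoms μ hA
  -- second moments on K
  obtain ⟨C, hCraw⟩ := hA K hK
  set C' : ℝ := max C 0 with hC'
  have hsqK : ∀ z ∈ K, Integrable (fun w => (lf z w) ^ 2) μ :=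
    fun z hz => (sq_integrable μ z C (hCraw z hz)).1
  have hCK : ∀ z ∈ K, ∫ w, (lf z w) ^ 2 ∂μ ≤ C' :=
    fun z hz => (sq_integrable μ z C (hCraw z hz)).2
  have hlfK : ∀ z ∈ K, Integrable (fun w => lf z w) μ :=
    fun z hz => lf_integrable μ z (hsqK z hz)
  have hnegK : ∀ z ∈ K, ∫ w, lf z w ∂μ < 0 := fun z hz => hKsub hz
  obtain ⟨T, hT1, δ, hδ, hmean⟩ := key1 μ hatom K hK hKne hlfK hsqK hnegK
  -- uniform upper bound on lf over supp × K
  obtain ⟨R, hR1, hRsub⟩ := (hS.union hK).isBounded.subset_closedBall_lt 1 0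
  set M : ℝ := max (Real.log (2 * R)) 1 with hM
  have hM1 : (1:ℝ) ≤ M := le_max_right _ _
  have hMbound : ∀ z ∈ K, ∀ w ∈ msupport μ, lf z w ≤ M := by
    intro z hz w hw
    have hzR : ‖z‖ ≤ R := by
      have := hRsub (Set.mem_union_right _ hz)
      simpa using mem_closedBall_zero_iff.mp this
    have hwR : ‖w‖ ≤ R := by
      have := hRsub (Set.mem_union_left _ hw)
      simpa using mem_closedBall_zero_iff.mp this
    have habs : ‖z - w‖ ≤ 2 * R := by
      calc ‖z - w‖ = ‖z - w‖ := rfl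
        _ ≤ ‖z‖ + ‖w‖ := norm_sub_le _ _
        _ ≤ 2 * R := by
            linarith
    rcases eq_or_lt_of_le (norm_nonneg (z - w)) with h0 | h0
    · show Real.log (‖z - w‖) ≤ M
      rw [← h0, Real.log_zero]; linarith
    · have : Real.log (‖z - w‖) ≤ Real.log (2 * R) :=
        Real.log_le_log h0 habs
      have h2 : Real.log (2 * R) ≤ M := le_max_left _ _
      show Real.log (‖z - w‖) ≤ M
      linarith
  -- choose lambda and c
  have hCT : (0:ℝ) < C' + T ^ 2 := by
    have : (0:ℝ) ≤ C' := le_max_right _ _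
    nlinarith
  set lam : ℝ := min (1 / M) (δ / (2 * (C' + T ^ 2))) with hlamdef
  have hlam : 0 < lam := by
    apply lt_min
    · positivity
    · positivity
  have hlamM : lam * M ≤ 1 := by
    have h1 : lam ≤ 1 / M := min_le_left _ _
    have hM0 : (0:ℝ) < M := by linarith
    rw [← le_div_iff₀ hM0]
    exact h1
  have hlam2 : lam * (C' + T ^ 2) ≤ δ / 2 := by
    have h1 : lam ≤ δ / (2 * (C' + T ^ 2)) := min_le_right _ _
    rw [← le_div_iff₀ hCT]
    calc lam ≤ δ / (2 * (C' + T ^ 2)) := h1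
      _ = δ / 2 / (C' + T ^ 2) := by
          rw [div_div]
  refine ⟨lam * δ / 4, by positivity, fun z hz => ?_⟩
  -- the per-z bound
  have haeM : ∀ᵐ w ∂μ, lf z w ≤ M := by
    have hsub : {w : ℂ | ¬ lf z w ≤ M} ⊆ (msupport μ)ᶜ := by
      intro w hw
      simp only [Set.mem_setOf_eq, not_le] at hw
      intro hmem
      exact absurd (hMbound z hz w hmem) (not_le.mpr hw)
    exact measure_mono_null hsub (msupport_compl_null μ)
  have hmgf : ∫ w, Real.exp (lam * trc T z w) ∂μ ≤ Real.exp (-(lam * δ) / 2) :=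
    mgf_bound μ T M lam δ C' z hT1 hM1 hlam hlamM hlam2 (hsqK z hz) (hlfK z hz)
      (hCK z hz) (hmean z hz) haeM
  set m₀ : ℝ := ∫ w, Real.exp (lam * trc T z w) ∂μ with hm₀def
  have hm₀0 : 0 ≤ m₀ := integral_nonneg fun w => (Real.exp_pos _).le
  -- the iid truncated variables
  set Y : ℕ → Ω → ℝ := fun k ω => trc T z (X k ω) with hYdef
  have hYmeas : ∀ k, Measurable (Y k) := fun k => (trc_meas T z).comp (hmeas k)
  have hYindep : iIndepFun Y P :=
    hindep.comp (fun _ => trc T z) (fun _ => trc_meas T z)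
  have haeY : ∀ k, ∀ᵐ ω ∂P, Y k ω ≤ M := by
    intro k
    have hme : MeasurableSet {w : ℂ | ¬ lf z w ≤ M} := by
      have : {w : ℂ | ¬ lf z w ≤ M} = {w : ℂ | M < lf z w} := by ext w; simp
      rw [this]
      exact measurableSet_lt measurable_const (lf_meas z)
    have h1 : P {ω | ¬ lf z (X k ω) ≤ M} = 0 := by
      have : {ω | ¬ lf z (X k ω) ≤ M} = X k ⁻¹' {w : ℂ | ¬ lf z w ≤ M} := rfl
      rw [this, ← Measure.map_apply (hmeas k) hme, hid k]
      rw [ae_iff] at haeM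
      exact haeM
    have h2 : ∀ᵐ ω ∂P, lf z (X k ω) ≤ M := by
      rw [ae_iff]; exact h1
    filter_upwards [h2] with ω hω
    exact max_le hω (by linarith)
  have hexpint : ∀ k, Integrable (fun ω => Real.exp (lam * Y k ω)) P := by
    intro k
    refine Integrable.mono' (integrable_const (Real.exp (lam * M)))
      (((hYmeas k).const_mul lam).exp).aestronglyMeasurable ?_
    filter_upwards [haeY k] with ω hω
    rw [Real.norm_eq_abs, abs_of_pos (Real.exp_pos _)]
    exact Real.exp_le_exp.mpr (mul_le_mul_of_nonneg_left hω hlam.le)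
  have hmgf_eq : ∀ k, mgf (Y k) P lam = m₀ := by
    intro k
    have h1 : m₀ = ∫ ω, Real.exp (lam * trc T z (X k ω)) ∂P := by
      rw [hm₀def, ← hid k]
      exact integral_map (hmeas k).aemeasurable
        (((trc_meas T z).const_mul lam).exp).aestronglyMeasurable
    rw [h1]; rfl
  -- eventual bound
  set N : ℕ := ⌈4 * Real.log 2 / δ⌉₊ with hN
  filter_upwards [eventually_ge_atTop N] with n hn
  -- Chernoff
  have hint_sum := hYindep.integrable_exp_mul_sum hYmeas
    (s := Finset.range n) (fun i _ => hexpint i)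
  have hch := measure_ge_le_exp_mul_mgf (μ := P)
    (X := ∑ k ∈ Finset.range n, Y k) (-Real.log 2) hlam.le hint_sum
  rw [hYindep.mgf_sum hYmeas] at hch
  have hprod : ∏ k ∈ Finset.range n, mgf (Y k) P lam = m₀ ^ n := by
    rw [Finset.prod_congr rfl (fun k _ => hmgf_eq k), Finset.prod_const, Finset.card_range]
  rw [hprod] at hch
  -- numeric bound
  have hnum : Real.exp (- lam * - Real.log 2) * m₀ ^ n ≤ Real.exp (-(lam * δ / 4) * n) := by
    have hstep : m₀ ^ n ≤ Real.exp (-(lam * δ) / 2) ^ n := pow_le_pow_left₀ hm₀0 hmgf n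
    have h2 : Real.exp (-(lam * δ) / 2) ^ n = Real.exp ((n:ℝ) * (-(lam * δ) / 2)) :=
      (Real.exp_nat_mul _ n).symm
    have hnge : 4 * Real.log 2 / δ ≤ (n : ℝ) :=
      le_trans (Nat.le_ceil _) (Nat.cast_le.mpr hn)
    have hlog2 : 4 * Real.log 2 ≤ (n:ℝ) * δ := by
      rw [div_le_iff₀ hδ] at hnge; linarith
    have harith : lam * Real.log 2 + (n:ℝ) * (-(lam * δ) / 2) ≤ -(lam * δ / 4) * n := by
      nlinarith [hlam.le]
    calc Real.exp (- lam * - Real.log 2) * m₀ ^ n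
        ≤ Real.exp (- lam * - Real.log 2) * Real.exp ((n:ℝ) * (-(lam * δ) / 2)) := by
          rw [← h2]
          exact mul_le_mul_of_nonneg_left hstep (Real.exp_pos _).le
      _ = Real.exp (- lam * - Real.log 2 + (n:ℝ) * (-(lam * δ) / 2)) :=
          (Real.exp_add _ _).symm
      _ ≤ Real.exp (-(lam * δ / 4) * n) := by
          apply Real.exp_le_exp.mpr
          have : - lam * - Real.log 2 = lam * Real.log 2 := by ring
          rw [this]
          exact harith
  have hch2 : (P {ω | -Real.log 2 ≤ (∑ k ∈ Finset.range n, Y k) ω}).toReal ≤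
      Real.exp (-(lam * δ / 4) * n) := le_trans hch hnum
  -- event inclusion
  set E : Set Ω := {ω | -Real.log 2 <
      Real.log (‖∏ k ∈ Finset.range n, (z - X k ω)‖)} with hE
  set E' : Set Ω := {ω | -Real.log 2 ≤ (∑ k ∈ Finset.range n, Y k) ω} with hE'
  set bad : Set Ω := ⋃ k : ℕ, X k ⁻¹' {z} with hbaddef
  have hbad : P bad = 0 := by
    refine measure_iUnion_null fun k => ?_
    rw [← Measure.map_apply (hmeas k) (measurableSet_singleton z), hid k]
    exact hatom z
  have hincl : E ⊆ E' ∪ bad := by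
    intro ω hω
    by_cases hb : ω ∈ bad
    · exact Or.inr hb
    · left
      simp only [hbaddef, Set.mem_iUnion, Set.mem_preimage, Set.mem_singleton_iff,
        not_exists] at hb
      have hne : ∀ k ∈ Finset.range n, ‖z - X k ω‖ ≠ 0 := by
        intro k _
        simpa [sub_eq_zero] using fun h => hb k (h.symm) -- z = X k ω → False
      have hlogeq : Real.log (‖∏ k ∈ Finset.range n, (z - X k ω)‖)
          = ∑ k ∈ Finset.range n, lf z (X k ω) := by
        rw [norm_prod]
        exact Real.log_prod hne
      have hsum_le : ∑ k ∈ Finset.range n, lf z (X k ω)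
          ≤ (∑ k ∈ Finset.range n, Y k) ω := by
        rw [Finset.sum_apply]
        exact Finset.sum_le_sum fun k _ => lf_le_trc T z (X k ω)
      have hωE : -Real.log 2 <
          Real.log (‖∏ k ∈ Finset.range n, (z - X k ω)‖) := hω
      rw [hlogeq] at hωE
      exact le_of_lt (lt_of_lt_of_le hωE hsum_le)
  have hPE : P E ≤ P E' := by
    calc P E ≤ P (E' ∪ bad) := measure_mono hincl
      _ ≤ P E' + P bad := measure_union_le _ _
      _ = P E' := by rw [hbad, add_zero]
  refine le_trans hPE ?_
  rw [ENNReal.le_ofReal_iff_toReal_le (measure_ne_top P E') (Real.exp_pos _).le]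
  exact le_trans (ENNReal.toReal_mono (measure_ne_top P _) le_rfl) hch2
end

section
/- Assume μ satisfies Assumption (D), and let X be a random variable with distribution μ. Then there exist constants θ₀ > 0 and τ < ∞ such that for every z ∈ S and every real θ with |θ| ≤ θ₀, one has E[exp(θ·(U_μ(z) − log|z − X|))] ≤ exp(τ θ²). -/
set_option maxHeartbeats 10000000


open MeasureTheory ProbabilityTheory Filter Metric

/-- Elementary: `exp x ≤ 1 + x + x² exp |x|`. -/
private lemma exp_le_quad (x : ℝ) : Real.exp x ≤ 1 + x + x ^ 2 * Real.exp |x| := by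
  rcases le_or_gt |x| 1 with h | h
  · have hb := Real.exp_bound h (n := 2) (by norm_num)
    have hs : ∑ m ∈ Finset.range 2, x ^ m / m.factorial = 1 + x := by
      simp [Finset.sum_range_succ]
    rw [hs] at hb
    norm_num at hb
    have h1 := (abs_le.1 hb).2
    have h2 : 1 ≤ Real.exp |x| := Real.one_le_exp (abs_nonneg x)
    nlinarith [sq_abs x, sq_nonneg x]
  · rcases le_or_gt 0 x with hx | hx
    · have hax : |x| = x := abs_of_nonneg hx
      have hx1 : 1 ≤ x := by rw [hax] at h; linarith
      rw [hax]
      nlinarith [Real.exp_pos x, sq_nonneg (x - 1)]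
    · have hax : |x| = -x := abs_of_neg hx
      have hx1 : x ≤ -1 := by rw [hax] at h; linarith
      have he : Real.exp x ≤ 1 := Real.exp_le_one_iff.mpr hx.le
      have h2 : 1 ≤ Real.exp |x| := Real.one_le_exp (abs_nonneg x)
      nlinarith [sq_nonneg x, sq_nonneg (x + 1)]

/-- a.e. every point lies in the support. -/
private lemma ae_mem_msupport (μ : Measure ℂ) : ∀ᵐ w ∂μ, w ∈ msupport μ := by
  obtain ⟨b, hbc, -, hbb⟩ := TopologicalSpace.exists_countable_basis ℂ
  have hsub : (msupport μ)ᶜ ⊆ ⋃₀ {s ∈ b | μ s = 0} := by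
    intro x hx
    simp only [msupport, Set.mem_compl_iff, Set.mem_setOf_eq, not_forall] at hx
    obtain ⟨U, hU, hμU⟩ := hx
    have hμU0 : μ U = 0 := by simpa using hμU
    obtain ⟨s, hsb, hxs, hsU⟩ := hbb.mem_nhds_iff.mp hU
    exact ⟨s, ⟨hsb, le_antisymm (hμU0 ▸ measure_mono hsU) zero_le⟩, hxs⟩
  have h0 : μ (⋃₀ {s ∈ b | μ s = 0}) = 0 :=
    (measure_sUnion_null_iff (hbc.mono (Set.sep_subset _ _))).2 fun s hs => hs.2
  rw [MeasureTheory.ae_iff]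
  exact measure_mono_null hsub h0

theorem statement14
    (μ : Measure ℂ) [IsProbabilityMeasure μ] (hS : IsCompact (msupport μ))
    (hD : AssumptionD μ) :
    ∃ θ₀ > (0 : ℝ), ∃ τ : ℝ, ∀ z ∈ msupport μ, ∀ θ : ℝ, |θ| ≤ θ₀ →
      ∫ w, Real.exp (θ * (logPot μ z - Real.log ‖z - w‖)) ∂μ ≤
        Real.exp (τ * θ ^ 2) := by
  obtain ⟨C, ε, hε, hDC⟩ := hD
  set S := msupport μ with hSdef
  set C₀ : ℝ := max C 0 with hC₀def
  have hC₀ : 0 ≤ C₀ := le_max_right _ _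
  set p : ℝ := ε / 2 with hpdef
  have hp : 0 < p := by rw [hpdef]; linarith
  set q : ℝ := ε / 4 with hqdef
  have hq : 0 < q := by rw [hqdef]; linarith
  have hp2q : p = 2 * q := by rw [hpdef, hqdef]; ring
  have hεp : ε = 2 * p := by rw [hpdef]; ring
  set M : ℝ := Metric.diam S + 1 with hMdef
  have hM1 : 1 ≤ M := by
    have := Metric.diam_nonneg (s := S); rw [hMdef]; linarith
  have hlm : 0 ≤ Real.log M := Real.log_nonneg hM1
  -- a.e. the log-distance is at most log M
  have hdist : ∀ z ∈ S, ∀ᵐ w ∂μ, Real.log ‖z - w‖ ≤ Real.log M := by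
    intro z hz
    filter_upwards [ae_mem_msupport μ] with w hw
    have hd : ‖z - w‖ ≤ Metric.diam S := by
      rw [← Complex.dist_eq]; exact Metric.dist_le_diam_of_mem hS.isBounded hz hw
    rcases eq_or_lt_of_le (norm_nonneg (z - w)) with h0 | h0
    · rw [← h0, Real.log_zero]; exact hlm
    · exact Real.log_le_log h0 (by rw [hMdef]; linarith)
  -- geometric series constants
  set a : ℝ := Real.exp (-(p * Real.log 2)) with hadef
  have hl2 : 0 < Real.log 2 := Real.log_pos one_lt_two
  have ha0 : 0 ≤ a := (Real.exp_pos _).le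
  have ha1 : a < 1 := by
    rw [hadef, Real.exp_lt_one_iff]; nlinarith
  have h1a : 0 < 1 - a := by linarith
  set c : ℝ := C₀ * Real.exp ((p + ε) * Real.log 2) with hcdef
  have hc0 : 0 ≤ c := by positivity
  set B₁ : ℝ := 1 + c * (1 - a)⁻¹ with hB₁def
  have hB₁0 : 0 ≤ B₁ := by positivity
  -- Lemma A: uniform lintegral bound on exp(-p log |z - w|)
  have hA : ∀ z : ℂ, ∫⁻ w, ENNReal.ofReal
      (Real.exp (-p * Real.log ‖z - w‖)) ∂μ ≤ ENNReal.ofReal B₁ := by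
    intro z
    set F : ℕ → ℂ → ENNReal := fun j w => (Metric.closedBall z ((2 : ℝ)⁻¹ ^ j)).indicator
      (fun _ => ENNReal.ofReal (Real.exp (((j : ℝ) + 1) * (p * Real.log 2)))) w with hFdef
    have hpt : ∀ w, ENNReal.ofReal (Real.exp (-p * Real.log ‖z - w‖)) ≤
        1 + ∑' j, F j w := by
      intro w
      set r := ‖z - w‖ with hrdef
      have hr0 : 0 ≤ r := norm_nonneg _
      rcases lt_or_ge 1 r with hr | hr
      · have hle : -p * Real.log r ≤ 0 := by
          have := Real.log_pos hr; nlinarith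
        refine le_trans ?_ le_self_add
        rw [ENNReal.ofReal_le_one]
        exact Real.exp_le_one_iff.mpr hle
      rcases eq_or_lt_of_le hr0 with h0 | h0
      · rw [← h0, Real.log_zero, mul_zero, Real.exp_zero, ENNReal.ofReal_one]
        exact le_self_add
      · obtain ⟨k, hk1, hk2⟩ : ∃ k : ℕ, (2⁻¹ : ℝ) ^ (k + 1) < r ∧ r ≤ (2⁻¹ : ℝ) ^ k := by
          have hex : ∃ n : ℕ, (2⁻¹ : ℝ) ^ n < r := exists_pow_lt_of_lt_one h0 (by norm_num)
          have hn0 : Nat.find hex ≠ 0 := by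
            intro hcon
            have := Nat.find_spec hex
            rw [hcon, pow_zero] at this
            linarith
          refine ⟨Nat.find hex - 1, ?_, ?_⟩
          · have := Nat.find_spec hex
            rwa [← Nat.succ_pred_eq_of_pos (Nat.pos_of_ne_zero hn0)] at this
          · exact not_lt.mp (Nat.find_min hex (Nat.sub_lt (Nat.pos_of_ne_zero hn0) one_pos))
        have hmem : w ∈ Metric.closedBall z ((2⁻¹ : ℝ) ^ k) := by
          rw [Metric.mem_closedBall, dist_comm, Complex.dist_eq]; exact hk2
        have hlog : -p * Real.log r ≤ ((k : ℝ) + 1) * (p * Real.log 2) := by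
          have h1 : Real.log ((2⁻¹ : ℝ) ^ (k + 1)) ≤ Real.log r :=
            Real.log_le_log (pow_pos (by norm_num) _) hk1.le
          rw [Real.log_pow, Real.log_inv] at h1
          push_cast at h1
          nlinarith
        calc ENNReal.ofReal (Real.exp (-p * Real.log r))
            ≤ ENNReal.ofReal (Real.exp (((k : ℝ) + 1) * (p * Real.log 2))) :=
              ENNReal.ofReal_le_ofReal (Real.exp_le_exp.mpr hlog)
          _ = F k w := by
              rw [hFdef]
              exact (Set.indicator_of_mem hmem
                (fun _ => ENNReal.ofReal (Real.exp (((k : ℝ) + 1) * (p * Real.log 2))))).symm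
          _ ≤ ∑' j, F j w := ENNReal.le_tsum k
          _ ≤ 1 + ∑' j, F j w := le_add_self
    have hFmeas : ∀ j, AEMeasurable (F j) μ := fun j =>
      (measurable_const.indicator measurableSet_closedBall).aemeasurable
    have hterm : ∀ j : ℕ, ∫⁻ w, F j w ∂μ ≤ ENNReal.ofReal (c * a ^ j) := by
      intro j
      have h2j : (0 : ℝ) < 2 * (2⁻¹ : ℝ) ^ j := by positivity
      have hballs : μ (Metric.closedBall z ((2⁻¹ : ℝ) ^ j)) ≤
          ENNReal.ofReal (C₀ * (2 * (2⁻¹ : ℝ) ^ j) ^ ε) := by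
        have hsub : Metric.closedBall z ((2⁻¹ : ℝ) ^ j) ⊆ Metric.ball z (2 * (2⁻¹ : ℝ) ^ j) :=
          Metric.closedBall_subset_ball
            (by nlinarith [pow_pos (show (0:ℝ) < 2⁻¹ by norm_num) j])
        refine le_trans (measure_mono hsub)
          (le_trans (hDC z _ h2j) (ENNReal.ofReal_le_ofReal ?_))
        have : (0:ℝ) ≤ (2 * (2⁻¹ : ℝ) ^ j) ^ ε := Real.rpow_nonneg h2j.le ε
        nlinarith [le_max_left C (0:ℝ)]
      have hval : ∫⁻ w, F j w ∂μ = ENNReal.ofReal (Real.exp (((j : ℝ) + 1) * (p * Real.log 2)))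
          * μ (Metric.closedBall z ((2⁻¹ : ℝ) ^ j)) := by
        rw [hFdef]
        rw [lintegral_indicator measurableSet_closedBall, setLIntegral_const]
      rw [hval]
      calc ENNReal.ofReal (Real.exp (((j : ℝ) + 1) * (p * Real.log 2)))
            * μ (Metric.closedBall z ((2⁻¹ : ℝ) ^ j))
          ≤ ENNReal.ofReal (Real.exp (((j : ℝ) + 1) * (p * Real.log 2)))
            * ENNReal.ofReal (C₀ * (2 * (2⁻¹ : ℝ) ^ j) ^ ε) := by
            exact mul_le_mul_right hballs _
        _ = ENNReal.ofReal (Real.exp (((j : ℝ) + 1) * (p * Real.log 2))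
            * (C₀ * (2 * (2⁻¹ : ℝ) ^ j) ^ ε)) :=
            (ENNReal.ofReal_mul (Real.exp_pos _).le).symm
        _ = ENNReal.ofReal (c * a ^ j) := by
            congr 1
            have hXj : (2 * (2⁻¹ : ℝ) ^ j) ^ ε = Real.exp (ε * ((1 - (j : ℝ)) * Real.log 2)) := by
              rw [Real.rpow_def_of_pos h2j]
              congr 1
              rw [Real.log_mul two_ne_zero (pow_ne_zero _ (by norm_num)), Real.log_pow,
                Real.log_inv]
              ring
            have haj : a ^ j = Real.exp ((j : ℝ) * (-(p * Real.log 2))) := by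
              rw [hadef, ← Real.exp_nat_mul]
            rw [hXj, haj, hcdef]
            have e1 : Real.exp (((j:ℝ) + 1) * (p * Real.log 2)) *
                Real.exp (ε * ((1 - (j:ℝ)) * Real.log 2)) =
                Real.exp ((p + ε) * Real.log 2) * Real.exp ((j:ℝ) * (-(p * Real.log 2))) := by
              rw [← Real.exp_add, ← Real.exp_add]
              congr 1
              rw [hεp]; ring
            rw [mul_left_comm, e1]; ring
    calc ∫⁻ w, ENNReal.ofReal (Real.exp (-p * Real.log ‖z - w‖)) ∂μ
        ≤ ∫⁻ w, (1 + ∑' j, F j w) ∂μ := lintegral_mono hpt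
      _ = 1 + ∑' j, ∫⁻ w, F j w ∂μ := by
          rw [lintegral_add_left measurable_const, lintegral_const, measure_univ, mul_one,
            lintegral_tsum hFmeas]
      _ ≤ 1 + ∑' j : ℕ, ENNReal.ofReal (c * a ^ j) := by
          exact add_le_add_right (ENNReal.tsum_le_tsum hterm) 1
      _ = 1 + ENNReal.ofReal (c * (1 - a)⁻¹) := by
          rw [← ENNReal.ofReal_tsum_of_nonneg (fun j => by positivity)
            ((summable_geometric_of_lt_one ha0 ha1).mul_left c), tsum_mul_left,
            tsum_geometric_of_lt_one ha0 ha1]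
      _ = ENNReal.ofReal B₁ := by
          rw [hB₁def, ENNReal.ofReal_add zero_le_one (by positivity), ENNReal.ofReal_one]
  -- integrability of the dominating function Φ
  have hΦmeas : ∀ z : ℂ, Measurable (fun w => Real.exp (-p * Real.log ‖z - w‖)) := by
    intro z
    have h1 : Continuous fun w : ℂ => ‖z - w‖ :=
      continuous_norm.comp (continuous_const.sub continuous_id)
    exact Real.measurable_exp.comp ((Real.measurable_log.comp h1.measurable).const_mul (-p))
  have hΦint : ∀ z : ℂ, Integrable (fun w => Real.exp (-p * Real.log ‖z - w‖)) μ := by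
    intro z
    refine ⟨(hΦmeas z).aestronglyMeasurable, ?_⟩
    rw [hasFiniteIntegral_iff_ofReal (Eventually.of_forall fun w => (Real.exp_pos _).le)]
    exact lt_of_le_of_lt (hA z) ENNReal.ofReal_lt_top
  have hΦval : ∀ z : ℂ, ∫ w, Real.exp (-p * Real.log ‖z - w‖) ∂μ ≤ B₁ := by
    intro z
    rw [integral_eq_lintegral_of_nonneg_ae (Eventually.of_forall fun w => (Real.exp_pos _).le)
      (hΦmeas z).aestronglyMeasurable]
    exact ENNReal.toReal_le_of_le_ofReal hB₁0 (hA z)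
  -- pointwise bound |t| ≤ K₀ exp(-p t) for t ≤ log M
  set K₀ : ℝ := (Real.log M + 1 / p) * Real.exp (p * Real.log M) with hK₀def
  have hK₀pos : 0 < K₀ := by
    have h1 : 0 < Real.log M + 1 / p := by
      have := one_div_pos.mpr hp; linarith
    exact mul_pos h1 (Real.exp_pos _)
  have habs_log : ∀ t : ℝ, t ≤ Real.log M → |t| ≤ K₀ * Real.exp (-p * t) := by
    intro t ht
    rcases le_or_gt 0 t with h0 | h0
    · rw [abs_of_nonneg h0]
      have h1 : Real.exp (p * Real.log M) * Real.exp (-p * t) =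
          Real.exp (p * (Real.log M - t)) := by rw [← Real.exp_add]; ring_nf
      have h2 : (1:ℝ) ≤ Real.exp (p * (Real.log M - t)) :=
        Real.one_le_exp (by nlinarith)
      have h3 : 0 < Real.log M + 1 / p := by
        have := one_div_pos.mpr hp; linarith
      calc t ≤ Real.log M + 1 / p := by
              have := one_div_pos.mpr hp; linarith
        _ = (Real.log M + 1 / p) * 1 := (mul_one _).symm
        _ ≤ (Real.log M + 1 / p) * (Real.exp (p * Real.log M) * Real.exp (-p * t)) := by
              rw [h1]; exact mul_le_mul_of_nonneg_left h2 h3.le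
        _ = K₀ * Real.exp (-p * t) := by rw [hK₀def]; ring
    · rw [abs_of_neg h0]
      have hpt : -(p * t) ≤ Real.exp (-(p * t)) := by
        have := Real.add_one_le_exp (-(p * t)); linarith
      have h2 : -t ≤ (1 / p) * Real.exp (-p * t) := by
        calc -t = (1 / p) * (-(p * t)) := by
              rw [mul_neg, ← mul_assoc, one_div_mul_cancel hp.ne', one_mul]
          _ ≤ (1 / p) * Real.exp (-(p * t)) :=
              mul_le_mul_of_nonneg_left hpt (by positivity)
          _ = (1 / p) * Real.exp (-p * t) := by ring_nf
      refine le_trans h2 (mul_le_mul_of_nonneg_right ?_ (Real.exp_pos _).le)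
      rw [hK₀def]
      have hexp1 : (1:ℝ) ≤ Real.exp (p * Real.log M) :=
        Real.one_le_exp (mul_nonneg hp.le hlm)
      nlinarith [one_div_pos.mpr hp]
  -- the potential is uniformly bounded on S
  set L : ℝ := K₀ * B₁ with hLdef
  have hL0 : 0 ≤ L := mul_nonneg hK₀pos.le hB₁0
  have hlmeas : ∀ z : ℂ, Measurable (fun w => Real.log ‖z - w‖) := fun z =>
    Real.measurable_log.comp
      (continuous_norm.comp (continuous_const.sub continuous_id)).measurable
  have hlbound : ∀ z ∈ S, ∀ᵐ w ∂μ, |Real.log ‖z - w‖| ≤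
      K₀ * Real.exp (-p * Real.log ‖z - w‖) := by
    intro z hz
    filter_upwards [hdist z hz] with w hw using habs_log _ hw
  have hlint : ∀ z ∈ S, Integrable (fun w => Real.log ‖z - w‖) μ := by
    intro z hz
    refine Integrable.mono' ((hΦint z).const_mul K₀) (hlmeas z).aestronglyMeasurable ?_
    filter_upwards [hlbound z hz] with w hw
    rwa [Real.norm_eq_abs]
  have hU : ∀ z ∈ S, |logPot μ z| ≤ L := by
    intro z hz
    have h1 : |logPot μ z| ≤ ∫ w, |Real.log ‖z - w‖| ∂μ := by
      rw [logPot, ← Real.norm_eq_abs]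
      refine le_trans (norm_integral_le_integral_norm _) (le_of_eq ?_)
      simp [Real.norm_eq_abs]
    have h2 : ∫ w, |Real.log ‖z - w‖| ∂μ ≤
        ∫ w, K₀ * Real.exp (-p * Real.log ‖z - w‖) ∂μ :=
      integral_mono_ae (hlint z hz).abs ((hΦint z).const_mul K₀) (hlbound z hz)
    have h3 : ∫ w, K₀ * Real.exp (-p * Real.log ‖z - w‖) ∂μ =
        K₀ * ∫ w, Real.exp (-p * Real.log ‖z - w‖) ∂μ := integral_const_mul _ _
    have h4 := mul_le_mul_of_nonneg_left (hΦval z) hK₀pos.le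
    rw [hLdef]; linarith
  -- the master pointwise bound
  set K : ℝ := (2 * L ^ 2 + 8 / q ^ 2) * Real.exp (q * L) * Real.exp (4 * q * Real.log M)
    with hKdef
  have hK0 : 0 ≤ K := by positivity
  have hmaster : ∀ u t : ℝ, |u| ≤ L → t ≤ Real.log M →
      (u - t) ^ 2 * Real.exp (q * |u - t|) ≤ K * Real.exp (-p * t) := by
    intro u t hu ht
    have h1 : |u - t| ≤ L + |t| := by
      have h := abs_add_le u (-t)
      rw [← sub_eq_add_neg, abs_neg] at h
      linarith
    have h2 : Real.exp (q * |u - t|) ≤ Real.exp (q * L) * Real.exp (q * |t|) := by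
      rw [← Real.exp_add]
      apply Real.exp_le_exp.mpr
      nlinarith [abs_nonneg t]
    have h3 : (u - t) ^ 2 ≤ (L + |t|) ^ 2 := by
      nlinarith [abs_nonneg (u - t), sq_abs (u - t), abs_nonneg t]
    have h4 : |t| ^ 2 ≤ (4 / q ^ 2) * Real.exp (q * |t|) := by
      have he : q * |t| / 2 + 1 ≤ Real.exp (q * |t| / 2) := Real.add_one_le_exp _
      have hsq : Real.exp (q * |t| / 2) ^ 2 = Real.exp (q * |t|) := by
        rw [sq, ← Real.exp_add]; ring_nf
      have hy : 0 ≤ q * |t| := mul_nonneg hq.le (abs_nonneg t)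
      have hstep : q ^ 2 * |t| ^ 2 ≤ 4 * Real.exp (q * |t|) := by
        nlinarith [he, hsq, hy, Real.exp_pos (q * |t| / 2), abs_nonneg t]
      calc |t| ^ 2 = q ^ 2 * |t| ^ 2 / q ^ 2 :=
            (mul_div_cancel_left₀ _ (pow_ne_zero 2 hq.ne')).symm
        _ ≤ 4 * Real.exp (q * |t|) / q ^ 2 :=
            (div_le_div_iff_of_pos_right (pow_pos hq 2)).mpr hstep
        _ = (4 / q ^ 2) * Real.exp (q * |t|) := by ring
    have h5 : (L + |t|) ^ 2 ≤ (2 * L ^ 2 + 8 / q ^ 2) * Real.exp (q * |t|) := by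
      have he1 : (1:ℝ) ≤ Real.exp (q * |t|) := Real.one_le_exp (mul_nonneg hq.le (abs_nonneg t))
      have hexp : (0:ℝ) ≤ Real.exp (q * |t|) - 1 := sub_nonneg.mpr he1
      have e1 : (L + |t|) ^ 2 ≤ 2 * L ^ 2 + 2 * |t| ^ 2 := by nlinarith [sq_nonneg (L - |t|)]
      have e2 : 2 * |t| ^ 2 ≤ 2 * ((4 / q ^ 2) * Real.exp (q * |t|)) := by linarith
      have e3 : 2 * L ^ 2 ≤ 2 * L ^ 2 * Real.exp (q * |t|) := by
        nlinarith [mul_nonneg (sq_nonneg L) hexp]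
      have e4 : 2 * ((4 / q ^ 2) * Real.exp (q * |t|)) = (8 / q ^ 2) * Real.exp (q * |t|) := by
        ring
      nlinarith [e1, e2, e3, e4]
    have h6 : Real.exp (q * |t|) * Real.exp (q * |t|) ≤
        Real.exp (4 * q * Real.log M) * Real.exp (-p * t) := by
      rw [← Real.exp_add, ← Real.exp_add]
      apply Real.exp_le_exp.mpr
      have hpt : p * t = 2 * (q * t) := by rw [hp2q]; ring
      rcases le_or_gt 0 t with h0 | h0
      · rw [abs_of_nonneg h0]
        nlinarith [mul_le_mul_of_nonneg_left ht hq.le, hpt]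
      · rw [abs_of_neg h0]
        nlinarith [mul_nonneg hq.le hlm, hpt]
    calc (u - t) ^ 2 * Real.exp (q * |u - t|)
        ≤ (L + |t|) ^ 2 * (Real.exp (q * L) * Real.exp (q * |t|)) :=
          mul_le_mul h3 h2 (Real.exp_pos _).le (by positivity)
      _ ≤ ((2 * L ^ 2 + 8 / q ^ 2) * Real.exp (q * |t|)) *
          (Real.exp (q * L) * Real.exp (q * |t|)) :=
          mul_le_mul_of_nonneg_right h5 (by positivity)
      _ = ((2 * L ^ 2 + 8 / q ^ 2) * Real.exp (q * L)) *
          (Real.exp (q * |t|) * Real.exp (q * |t|)) := by ring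
      _ ≤ ((2 * L ^ 2 + 8 / q ^ 2) * Real.exp (q * L)) *
          (Real.exp (4 * q * Real.log M) * Real.exp (-p * t)) :=
          mul_le_mul_of_nonneg_left h6 (by positivity)
      _ = K * Real.exp (-p * t) := by rw [hKdef]; ring
  -- conclusion
  refine ⟨q, hq, K * B₁, ?_⟩
  intro z hz θ hθ
  by_cases hfint : Integrable
    (fun w => Real.exp (θ * (logPot μ z - Real.log ‖z - w‖))) μ
  · have hYint : Integrable (fun w => logPot μ z - Real.log ‖z - w‖) μ :=
      (integrable_const (logPot μ z)).sub (hlint z hz)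
    have hY1 : Integrable (fun w => θ * (logPot μ z - Real.log ‖z - w‖)) μ :=
      hYint.const_mul θ
    have hBint : Integrable
        (fun w => θ ^ 2 * (K * Real.exp (-p * Real.log ‖z - w‖))) μ :=
      ((hΦint z).const_mul K).const_mul (θ ^ 2)
    have h1Y : Integrable (fun w => 1 + θ * (logPot μ z - Real.log ‖z - w‖)) μ :=
      (integrable_const 1).add hY1
    have hgint : Integrable (fun w => 1 + θ * (logPot μ z - Real.log ‖z - w‖)
        + θ ^ 2 * (K * Real.exp (-p * Real.log ‖z - w‖))) μ := h1Y.add hBint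
    have hae : ∀ᵐ w ∂μ, Real.exp (θ * (logPot μ z - Real.log ‖z - w‖)) ≤
        1 + θ * (logPot μ z - Real.log ‖z - w‖)
        + θ ^ 2 * (K * Real.exp (-p * Real.log ‖z - w‖)) := by
      filter_upwards [hdist z hz] with w hw
      set t := Real.log ‖z - w‖ with htdef
      set u := logPot μ z with hudef
      set x := θ * (u - t) with hxdef
      have h1 : Real.exp x ≤ 1 + x + x ^ 2 * Real.exp |x| := exp_le_quad x
      have hxx : |x| ≤ q * |u - t| := by
        rw [hxdef, abs_mul]
        exact mul_le_mul_of_nonneg_right hθ (abs_nonneg _)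
      have h2 : x ^ 2 * Real.exp |x| ≤ θ ^ 2 * ((u - t) ^ 2 * Real.exp (q * |u - t|)) := by
        have hee : Real.exp |x| ≤ Real.exp (q * |u - t|) := Real.exp_le_exp.mpr hxx
        have hx2 : x ^ 2 = θ ^ 2 * (u - t) ^ 2 := by rw [hxdef]; ring
        rw [hx2, mul_assoc]
        exact mul_le_mul_of_nonneg_left
          (mul_le_mul_of_nonneg_left hee (sq_nonneg _)) (sq_nonneg θ)
      have h3 : (u - t) ^ 2 * Real.exp (q * |u - t|) ≤ K * Real.exp (-p * t) :=
        hmaster u t (hU z hz) hw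
      have h4 : θ ^ 2 * ((u - t) ^ 2 * Real.exp (q * |u - t|)) ≤
          θ ^ 2 * (K * Real.exp (-p * t)) :=
        mul_le_mul_of_nonneg_left h3 (sq_nonneg θ)
      linarith
    have hIeq : ∫ w, (logPot μ z - Real.log ‖z - w‖) ∂μ = 0 := by
      rw [integral_sub (integrable_const _) (hlint z hz), integral_const]
      simp [logPot]
    calc ∫ w, Real.exp (θ * (logPot μ z - Real.log ‖z - w‖)) ∂μ
        ≤ ∫ w, (1 + θ * (logPot μ z - Real.log ‖z - w‖)
          + θ ^ 2 * (K * Real.exp (-p * Real.log ‖z - w‖))) ∂μ :=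
          integral_mono_ae hfint hgint hae
      _ = 1 + θ * (∫ w, (logPot μ z - Real.log ‖z - w‖) ∂μ)
          + θ ^ 2 * (K * ∫ w, Real.exp (-p * Real.log ‖z - w‖) ∂μ) := by
          rw [integral_add h1Y hBint, integral_add (integrable_const 1) hY1,
            integral_const, integral_const_mul, integral_const_mul]
          simp
          exact Or.inl (integral_const_mul K _)
      _ = 1 + θ ^ 2 * (K * ∫ w, Real.exp (-p * Real.log ‖z - w‖) ∂μ) := by
          rw [hIeq]; ring
      _ ≤ 1 + (K * B₁) * θ ^ 2 := by
          have h5 := hΦval z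
          nlinarith [sq_nonneg θ, mul_le_mul_of_nonneg_left h5 hK0]
      _ ≤ Real.exp ((K * B₁) * θ ^ 2) := by
          nlinarith [Real.add_one_le_exp ((K * B₁) * θ ^ 2)]
  · rw [integral_undef hfint]
    exact (Real.exp_pos _).le
end

section
/- Let X₁, X₂, … be i.i.d. uniform on the unit circle 𝕊¹ ⊂ ℂ, and for z in the open unit disk set F_n(z) = (1/√n) ∑_{k=1}^n 1/(z − X_k). Then for any 0 < r < s < 1, E[ ( sup_{|z| ≤ r} |F_n(z)| )² ] ≤ 1 / ( (s − r)² (1 − s)² ) for every n. -/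
open MeasureTheory ProbabilityTheory Filter Metric

/-- The uniform probability measure on the unit circle in ℂ. -/
noncomputable def unifCircle : Measure ℂ :=
  (ENNReal.ofReal (2 * Real.pi))⁻¹ •
    Measure.map (fun θ : ℝ => Complex.exp (θ * Complex.I))
      (volume.restrict (Set.Ioc 0 (2 * Real.pi)))

lemma integral_unifCircle (f : ℂ → ℂ) (hf : Measurable f) :
    ∫ x, f x ∂unifCircle
      = (2 * Real.pi)⁻¹ • ∫ θ in (0:ℝ)..(2*Real.pi), f (circleMap 0 1 θ) := by
  rw [unifCircle, integral_smul_measure,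
    integral_map (by fun_prop) hf.aestronglyMeasurable,
    ENNReal.toReal_inv, ENNReal.toReal_ofReal (by positivity),
    intervalIntegral.integral_of_le (by positivity)]
  congr 1
  refine integral_congr_ae (Eventually.of_forall fun θ => ?_)
  simp [circleMap]

lemma circleIntegral_to_interval (g : ℂ → ℂ) :
    (∮ z in C((0:ℂ), 1), (z * Complex.I)⁻¹ * g z)
      = ∫ θ in (0:ℝ)..(2*Real.pi), g (circleMap 0 1 θ) := by
  simp only [circleIntegral, deriv_circleMap, smul_eq_mul]
  refine intervalIntegral.integral_congr fun θ _ => ?_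
  have h : circleMap 0 1 θ ≠ 0 := circleMap_ne_center one_ne_zero
  field_simp

open Complex in
lemma moment1 (w : ℂ) (hw : ‖w‖ < 1) :
    ∫ x, (w - x)⁻¹ ∂unifCircle = 0 := by
  rw [integral_unifCircle _ (by fun_prop), ← circleIntegral_to_interval (fun z => (w - z)⁻¹)]
  have hmain : (∮ z in C((0:ℂ), 1), (z * Complex.I)⁻¹ * (w - z)⁻¹) = 0 := by
    rcases eq_or_ne w 0 with rfl | hw0
    · have heq : Set.EqOn (fun z : ℂ => (z * Complex.I)⁻¹ * (0 - z)⁻¹)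
          (fun z : ℂ => Complex.I * (z - 0) ^ (-2 : ℤ)) (sphere (0:ℂ) 1) := by
        intro z hz
        have hz0 : z ≠ 0 := by
          intro h; simp [h] at hz
        simp only [zero_sub, sub_zero, zpow_neg, zpow_two]
        field_simp [Complex.I_ne_zero]
        linear_combination (-1) * Complex.I_sq
      rw [circleIntegral.integral_congr zero_le_one heq,
        circleIntegral.integral_const_mul,
        circleIntegral.integral_sub_zpow_of_ne (by decide) _ _ _, mul_zero]
    · have hwmem : w ∈ ball (0:ℂ) 1 := by simpa [mem_ball_zero_iff] using hw
      have heq : Set.EqOn (fun z : ℂ => (z * Complex.I)⁻¹ * (w - z)⁻¹)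
          (fun z : ℂ => (Complex.I * w⁻¹) * (z - w)⁻¹ - (Complex.I * w⁻¹) * (z - 0)⁻¹)
          (sphere (0:ℂ) 1) := by
        intro z hz
        have hz0 : z ≠ 0 := by intro h; simp [h] at hz
        have hz1 : ‖z‖ = 1 := by simpa using hz
        have hzw : z - w ≠ 0 := sub_ne_zero.2 (by rintro rfl; exact hw.ne hz1)
        have hwz : w - z ≠ 0 := fun h => hzw (by rw [← neg_sub] at h; simpa using neg_eq_zero.1 h)
        simp only [sub_zero]
        field_simp [Complex.I_ne_zero]
        linear_combination (w*(z-w)) * Complex.I_sq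
      rw [circleIntegral.integral_congr zero_le_one heq, circleIntegral.integral_sub,
        circleIntegral.integral_const_mul, circleIntegral.integral_const_mul,
        circleIntegral.integral_sub_inv_of_mem_ball hwmem,
        circleIntegral.integral_sub_inv_of_mem_ball (mem_ball_self one_pos), sub_self]
      · exact (circleIntegrable_sub_inv_iff.2 (Or.inr (fun h => by
          simp [mem_sphere_iff_norm] at h; simp [h] at hw))).const_mul _
      · exact (circleIntegrable_sub_inv_iff.2 (Or.inr (fun h => by
          simp [mem_sphere_iff_norm, sub_zero] at h))).const_mul _
  rw [hmain, smul_zero]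

open Complex in
lemma moment2 (w : ℂ) (hw : ‖w‖ < 1) :
    ∫ x, (‖(w - x)⁻¹‖)^2 ∂unifCircle = (1 - (‖w‖)^2)⁻¹ := by
  have hns : Complex.normSq w < 1 := by
    rw [← Complex.sq_norm]; nlinarith [norm_nonneg w]
  have ha' : ((Complex.normSq w : ℂ) - 1) ≠ 0 := by
    intro h
    have : (Complex.normSq w : ℂ) = 1 := by linear_combination h
    exact absurd (by exact_mod_cast this) hns.ne
  set a : ℂ := (Complex.normSq w : ℂ) - 1 with hadef
  have ha : a ≠ 0 := ha'
  have hwmem : w ∈ ball (0:ℂ) 1 := by simpa [mem_ball_zero_iff] using hw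
  have hden : ∀ z : ℂ, ‖z‖ ≤ 1 → (starRingEnd ℂ) w * z - 1 ≠ 0 := by
    intro z hzle h
    have h1 : (starRingEnd ℂ) w * z = 1 := by linear_combination h
    have h2 := congrArg norm h1
    rw [norm_mul, Complex.norm_conj, norm_one] at h2
    nlinarith [norm_nonneg w, norm_nonneg z,
      mul_le_mul_of_nonneg_left hzle (norm_nonneg w)]
  have hmble : Measurable fun x : ℂ => ((‖(w - x)⁻¹‖ : ℝ) : ℂ)^2 :=
    (Complex.measurable_ofReal.comp
      ((continuous_norm.measurable).comp ((measurable_const.sub measurable_id).inv))).pow_const 2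
  have key : ∫ x, ((‖(w - x)⁻¹‖ : ℝ) : ℂ)^2 ∂unifCircle
      = (((1 - (‖w‖)^2)⁻¹ : ℝ) : ℂ) := by
    rw [integral_unifCircle _ hmble,
      ← circleIntegral_to_interval (fun z => ((‖(w - z)⁻¹‖ : ℝ) : ℂ)^2)]
    have heq : Set.EqOn (fun z : ℂ => (z * Complex.I)⁻¹ * ((‖(w - z)⁻¹‖ : ℝ) : ℂ)^2)
        (fun z : ℂ => (Complex.I * a⁻¹) * (z - w)⁻¹
          - (Complex.I * ((starRingEnd ℂ) w * a⁻¹)) * ((starRingEnd ℂ) w * z - 1)⁻¹)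
        (sphere (0:ℂ) 1) := by
      intro z hz
      have hz1 : ‖z‖ = 1 := by simpa using hz
      have hz0 : z ≠ 0 := by intro h; simp [h] at hz1
      have hzw : z - w ≠ 0 := sub_ne_zero.2 (by rintro rfl; exact hw.ne hz1)
      have hwz : w - z ≠ 0 := fun h => hzw (by rw [← neg_sub] at h; simpa using neg_eq_zero.1 h)
      have hnz1 : Complex.normSq z = 1 := by rw [← Complex.sq_norm, hz1]; norm_num
      have hcz : (starRingEnd ℂ) z = z⁻¹ := by
        rw [Complex.inv_def, hnz1]; simp
      have hcwz : (starRingEnd ℂ) w * z - 1 ≠ 0 := hden z hz1.le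
      have hWz : (starRingEnd ℂ) w - z⁻¹ ≠ 0 := by
        intro h
        rw [sub_eq_zero] at h
        exact hcwz (by rw [h]; simp [inv_mul_cancel₀ hz0])
      have habs : ((‖(w - z)⁻¹‖ : ℝ) : ℂ)^2
          = ((w - z) * ((starRingEnd ℂ) w - z⁻¹))⁻¹ := by
        rw [show ((‖(w - z)⁻¹‖ : ℝ) : ℂ)^2
            = ((Complex.normSq ((w - z)⁻¹) : ℝ) : ℂ) by
          rw [← Complex.sq_norm]; push_cast; ring]
        rw [← Complex.mul_conj, map_inv₀, map_sub, hcz, mul_inv]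
      have haw : a = w * (starRingEnd ℂ) w - 1 := by rw [hadef, ← Complex.mul_conj]
      simp only
      rw [habs, haw]
      have ha2 : w * (starRingEnd ℂ) w - 1 ≠ 0 := by rw [← haw]; exact ha
      have hcwz' : z * (starRingEnd ℂ) w - 1 ≠ 0 := by rw [mul_comm]; exact hcwz
      field_simp
      linear_combination ((w * (starRingEnd ℂ) w - 1) * (z - w)) * Complex.I_sq
    have hci1 : CircleIntegrable (fun z : ℂ => (Complex.I * a⁻¹) * (z - w)⁻¹) 0 1 :=
      (circleIntegrable_sub_inv_iff.2 (Or.inr (fun h => by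
          have : ‖w‖ = 1 := by simpa using h
          exact hw.ne this))).const_mul _
    have hcont2 : ContinuousOn (fun z : ℂ =>
        (Complex.I * ((starRingEnd ℂ) w * a⁻¹)) * ((starRingEnd ℂ) w * z - 1)⁻¹)
        (sphere (0:ℂ) 1) :=
      continuousOn_const.mul
        ((((continuous_const.mul continuous_id).sub continuous_const).continuousOn).inv₀
          (fun z hz => hden z (le_of_eq (by simpa using hz))))
    have hci2 := hcont2.circleIntegrable zero_le_one
    rw [circleIntegral.integral_congr zero_le_one heq,
      circleIntegral.integral_sub hci1 hci2,
      circleIntegral.integral_const_mul, circleIntegral.integral_const_mul,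
      circleIntegral.integral_sub_inv_of_mem_ball hwmem]
    have hzero : (∮ z in C((0:ℂ), 1), ((starRingEnd ℂ) w * z - 1)⁻¹) = 0 := by
      refine Complex.circleIntegral_eq_zero_of_differentiable_on_off_countable zero_le_one
        Set.countable_empty ?_ ?_
      · exact (((continuous_const.mul continuous_id).sub continuous_const).continuousOn).inv₀
          (fun z hz => hden z (by simpa [mem_closedBall_zero_iff] using hz))
      · intro z hz
        refine DifferentiableAt.inv ?_ (hden z (le_of_lt (by simpa [mem_ball_zero_iff] using hz.1)))
        exact ((differentiable_const _).mul differentiable_id).differentiableAt.sub_const 1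
    rw [hzero, mul_zero, sub_zero, Complex.real_smul]
    have hpi : (Real.pi : ℂ) ≠ 0 := by exact_mod_cast Real.pi_ne_zero
    have hb : ((‖w‖ : ℂ))^2 - 1 ≠ 0 := by
      rw [hadef, ← Complex.sq_norm] at ha
      intro h; apply ha; push_cast; linear_combination h
    rw [hadef, ← Complex.sq_norm]
    push_cast
    field_simp
    rw [eq_div_iff (by intro h; apply hb; linear_combination -h)]
    linear_combination (1 - ((‖w‖ : ℂ))^2) * Complex.I_sq
  have h2 := integral_ofReal (𝕜 := ℂ) (f := fun x => (‖(w - x)⁻¹‖)^2) (μ := unifCircle)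
  have h4 : ∫ x, ((‖(w - x)⁻¹‖ ^ 2 : ℝ) : ℂ) ∂unifCircle
      = (((1 - (‖w‖)^2)⁻¹ : ℝ) : ℂ) := by
    rw [← key]
    simp only [Complex.ofReal_pow]
  exact RCLike.ofReal_injective (h2.symm.trans h4)

lemma unifCircle_sphere_compl : unifCircle ((sphere (0:ℂ) 1)ᶜ) = 0 := by
  rw [unifCircle, Measure.smul_apply,
    Measure.map_apply (by fun_prop) (isClosed_sphere.measurableSet.compl)]
  have : (fun θ : ℝ => Complex.exp (θ * Complex.I)) ⁻¹' (sphere (0:ℂ) 1)ᶜ = ∅ := by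
    ext θ
    simp [Complex.norm_exp_ofReal_mul_I, mem_sphere_iff_norm]
  simp [this]

lemma ae_abs_eq_one {Ω : Type*} [MeasurableSpace Ω] (P : Measure Ω)
    (V : Ω → ℂ) (hm : Measurable V) (hd : Measure.map V P = unifCircle) :
    ∀ᵐ ω ∂P, ‖V ω‖ = 1 := by
  have h0 : P (V ⁻¹' (sphere (0:ℂ) 1)ᶜ) = 0 := by
    rw [← Measure.map_apply hm isClosed_sphere.measurableSet.compl, hd]
    exact unifCircle_sphere_compl
  refine (measure_eq_zero_iff_ae_notMem.1 h0).mono fun ω hω => ?_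
  simp only [Set.mem_preimage, Set.mem_compl_iff, not_not] at hω
  simpa [mem_sphere_iff_norm] using hω

lemma momP1 {Ω : Type*} [MeasurableSpace Ω] (P : Measure Ω)
    (V : Ω → ℂ) (hm : Measurable V) (hd : Measure.map V P = unifCircle)
    (w : ℂ) (hw : ‖w‖ < 1) :
    ∫ ω, (w - V ω)⁻¹ ∂P = 0 := by
  have : ∫ ω, (w - V ω)⁻¹ ∂P = ∫ x, (w - x)⁻¹ ∂(Measure.map V P) :=
    (integral_map hm.aemeasurable
      ((measurable_const.sub measurable_id).inv.aestronglyMeasurable)).symm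
  rw [this, hd, moment1 w hw]

lemma momP2 {Ω : Type*} [MeasurableSpace Ω] (P : Measure Ω)
    (V : Ω → ℂ) (hm : Measurable V) (hd : Measure.map V P = unifCircle)
    (w : ℂ) (hw : ‖w‖ < 1) :
    ∫ ω, (‖(w - V ω)⁻¹‖)^2 ∂P = (1 - (‖w‖)^2)⁻¹ := by
  have hmb : Measurable fun x : ℂ => (‖(w - x)⁻¹‖)^2 :=
    ((continuous_norm.measurable).comp ((measurable_const.sub measurable_id).inv)).pow_const 2
  have : ∫ ω, (‖(w - V ω)⁻¹‖)^2 ∂P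
      = ∫ x, (‖(w - x)⁻¹‖)^2 ∂(Measure.map V P) :=
    (integral_map hm.aemeasurable hmb.aestronglyMeasurable).symm
  rw [this, hd, moment2 w hw]

lemma sum_moment {Ω : Type*} [MeasurableSpace Ω] (P : Measure Ω) [IsProbabilityMeasure P]
    (X : ℕ → Ω → ℂ) (hmeas : ∀ i, Measurable (X i))
    (hid : ∀ i, Measure.map (X i) P = unifCircle)
    (hindep : iIndepFun X P)
    (w : ℂ) (hw : ‖w‖ < 1) (n : ℕ) :
    ∫ ω, (‖∑ k ∈ Finset.range n, (w - X k ω)⁻¹‖)^2 ∂P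
      = n * (1 - (‖w‖)^2)⁻¹ := by
  have hC : (0:ℝ) < 1 - ‖w‖ := by linarith
  set Y : ℕ → Ω → ℂ := fun k ω => (w - X k ω)⁻¹ with hYdef
  have hYm : ∀ k, Measurable (Y k) := fun k => (measurable_const.sub (hmeas k)).inv
  have hbd : ∀ k, ∀ᵐ ω ∂P, ‖Y k ω‖ ≤ (1 - ‖w‖)⁻¹ := by
    intro k
    filter_upwards [ae_abs_eq_one P (X k) (hmeas k) (hid k)] with ω hω
    have h1 : 1 - ‖w‖ ≤ ‖w - X k ω‖ := by
      have h2 : ‖X k ω‖ - ‖w‖ ≤ ‖X k ω - w‖ := norm_sub_norm_le _ _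
      rw [norm_sub_rev] at h2
      simpa [hω] using h2
    have : (‖w - X k ω‖)⁻¹ ≤ (1 - ‖w‖)⁻¹ :=
      inv_anti₀ hC h1
    simpa [hYdef, norm_inv] using this
  have hmemY : ∀ k, MemLp (Y k) 2 P :=
    fun k => MemLp.of_bound (hYm k).aestronglyMeasurable _ (hbd k)
  have hintY : ∀ k, Integrable (Y k) P := fun k => (hmemY k).integrable one_le_two
  set R : ℕ → Ω → ℝ := fun k ω => (Y k ω).re with hRdef
  set M : ℕ → Ω → ℝ := fun k ω => (Y k ω).im with hMdef
  have hRm : ∀ k, Measurable (R k) := fun k => Complex.measurable_re.comp (hYm k)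
  have hMm : ∀ k, Measurable (M k) := fun k => Complex.measurable_im.comp (hYm k)
  have hmemR : ∀ k, MemLp (R k) 2 P := by
    intro k
    refine MemLp.of_bound (hRm k).aestronglyMeasurable ((1 - ‖w‖)⁻¹) ?_
    filter_upwards [hbd k] with ω hω
    exact le_trans (by simpa using Complex.abs_re_le_norm (Y k ω)) hω
  have hmemM : ∀ k, MemLp (M k) 2 P := by
    intro k
    refine MemLp.of_bound (hMm k).aestronglyMeasurable ((1 - ‖w‖)⁻¹) ?_
    filter_upwards [hbd k] with ω hω
    exact le_trans (by simpa using Complex.abs_im_le_norm (Y k ω)) hω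
  have hER : ∀ k, ∫ ω, R k ω ∂P = 0 := by
    intro k
    have h := integral_re (μ := P) (hintY k)
    simp only [RCLike.re_to_complex] at h
    rw [hRdef]
    simp only
    rw [h, momP1 P (X k) (hmeas k) (hid k) w hw, Complex.zero_re]
  have hEM : ∀ k, ∫ ω, M k ω ∂P = 0 := by
    intro k
    have h := integral_im (μ := P) (hintY k)
    simp only [RCLike.im_to_complex] at h
    rw [hMdef]
    simp only
    rw [h, momP1 P (X k) (hmeas k) (hid k) w hw, Complex.zero_im]
  have hφR : Measurable (fun x : ℂ => ((w - x)⁻¹).re) :=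
    Complex.measurable_re.comp ((measurable_const.sub measurable_id).inv)
  have hφM : Measurable (fun x : ℂ => ((w - x)⁻¹).im) :=
    Complex.measurable_im.comp ((measurable_const.sub measurable_id).inv)
  have hindR : Set.Pairwise ↑(Finset.range n) (fun i j => IndepFun (R i) (R j) P) :=
    fun i _ j _ hij => (hindep.indepFun hij).comp hφR hφR
  have hindM : Set.Pairwise ↑(Finset.range n) (fun i j => IndepFun (M i) (M j) P) :=
    fun i _ j _ hij => (hindep.indepFun hij).comp hφM hφM
  -- second moment of sums of re / im parts
  have hkeyR : ∫ ω, (∑ k ∈ Finset.range n, R k ω)^2 ∂P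
      = ∑ k ∈ Finset.range n, ∫ ω, (R k ω)^2 ∂P := by
    have hv := IndepFun.variance_sum (μ := P) (fun i _ => hmemR i) hindR
    have hS : MemLp (∑ i ∈ Finset.range n, R i) 2 P :=
      memLp_finsetSum' _ (fun i _ => hmemR i)
    rw [variance_eq_sub hS] at hv
    have hES : ∫ ω, (∑ i ∈ Finset.range n, R i) ω ∂P = 0 := by
      simp only [Finset.sum_apply]
      rw [integral_finset_sum _ (fun i _ => (hmemR i).integrable one_le_two)]
      simp [hER]
    have hvk : ∀ k ∈ Finset.range n, variance (R k) P = ∫ ω, (R k ω)^2 ∂P := by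
      intro k _
      rw [variance_eq_sub (hmemR k)]
      have : ∫ ω, (R k) ω ∂P = 0 := hER k
      simp only [Pi.pow_apply] at *
      rw [this]
      simp
    rw [Finset.sum_congr rfl hvk] at hv
    have : P[(∑ i ∈ Finset.range n, R i) ^ 2] = ∫ ω, (∑ k ∈ Finset.range n, R k ω)^2 ∂P := by
      congr 1
      funext ω
      simp [Finset.sum_apply]
    rw [this, hES] at hv
    simpa using hv
  have hkeyM : ∫ ω, (∑ k ∈ Finset.range n, M k ω)^2 ∂P
      = ∑ k ∈ Finset.range n, ∫ ω, (M k ω)^2 ∂P := by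
    have hv := IndepFun.variance_sum (μ := P) (fun i _ => hmemM i) hindM
    have hS : MemLp (∑ i ∈ Finset.range n, M i) 2 P :=
      memLp_finsetSum' _ (fun i _ => hmemM i)
    rw [variance_eq_sub hS] at hv
    have hES : ∫ ω, (∑ i ∈ Finset.range n, M i) ω ∂P = 0 := by
      simp only [Finset.sum_apply]
      rw [integral_finset_sum _ (fun i _ => (hmemM i).integrable one_le_two)]
      simp [hEM]
    have hvk : ∀ k ∈ Finset.range n, variance (M k) P = ∫ ω, (M k ω)^2 ∂P := by
      intro k _
      rw [variance_eq_sub (hmemM k)]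
      have : ∫ ω, (M k) ω ∂P = 0 := hEM k
      simp only [Pi.pow_apply] at *
      rw [this]
      simp
    rw [Finset.sum_congr rfl hvk] at hv
    have : P[(∑ i ∈ Finset.range n, M i) ^ 2] = ∫ ω, (∑ k ∈ Finset.range n, M k ω)^2 ∂P := by
      congr 1
      funext ω
      simp [Finset.sum_apply]
    rw [this, hES] at hv
    simpa using hv
  -- combine
  have hpt : ∀ ω, (‖∑ k ∈ Finset.range n, Y k ω‖)^2
      = (∑ k ∈ Finset.range n, R k ω)^2 + (∑ k ∈ Finset.range n, M k ω)^2 := by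
    intro ω
    rw [Complex.sq_norm, Complex.normSq_apply, Complex.re_sum, Complex.im_sum]
    ring
  have hintR2 : ∀ k, Integrable (fun ω => (R k ω)^2) P := by
    intro k
    have := (hmemR k).integrable_sq
    simpa [Pi.pow_apply] using this
  have hintM2 : ∀ k, Integrable (fun ω => (M k ω)^2) P := by
    intro k
    have := (hmemM k).integrable_sq
    simpa [Pi.pow_apply] using this
  have hintSR : Integrable (fun ω => (∑ k ∈ Finset.range n, R k ω)^2) P := by
    have := (memLp_finsetSum' (μ := P) (Finset.range n) (fun i _ => hmemR i)).integrable_sq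
    simpa [Pi.pow_apply, Finset.sum_apply] using this
  have hintSM : Integrable (fun ω => (∑ k ∈ Finset.range n, M k ω)^2) P := by
    have := (memLp_finsetSum' (μ := P) (Finset.range n) (fun i _ => hmemM i)).integrable_sq
    simpa [Pi.pow_apply, Finset.sum_apply] using this
  calc ∫ ω, (‖∑ k ∈ Finset.range n, (w - X k ω)⁻¹‖)^2 ∂P
      = ∫ ω, ((∑ k ∈ Finset.range n, R k ω)^2 + (∑ k ∈ Finset.range n, M k ω)^2) ∂P := by
        refine integral_congr_ae (Eventually.of_forall fun ω => ?_)
        exact hpt ω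
    _ = ∑ k ∈ Finset.range n, (∫ ω, (R k ω)^2 ∂P + ∫ ω, (M k ω)^2 ∂P) := by
        rw [integral_add hintSR hintSM, hkeyR, hkeyM, ← Finset.sum_add_distrib]
    _ = ∑ k ∈ Finset.range n, (1 - (‖w‖)^2)⁻¹ := by
        refine Finset.sum_congr rfl fun k _ => ?_
        rw [← integral_add (hintR2 k) (hintM2 k)]
        have : ∀ ω, (R k ω)^2 + (M k ω)^2 = (‖(w - X k ω)⁻¹‖)^2 := by
          intro ω
          rw [Complex.sq_norm, Complex.normSq_apply]
          ring
        rw [integral_congr_ae (Eventually.of_forall fun ω => this ω)]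
        exact momP2 P (X k) (hmeas k) (hid k) w hw
    _ = n * (1 - (‖w‖)^2)⁻¹ := by
        rw [Finset.sum_const, Finset.card_range, nsmul_eq_mul]

lemma cauchy_bound (x : ℕ → ℂ) (n : ℕ) (hx : ∀ k, ‖x k‖ = 1)
    (r s : ℝ) (hr : 0 < r) (hrs : r < s) (hs : s < 1) :
    (sSup ((fun z : ℂ =>
        ‖(Real.sqrt n : ℂ)⁻¹ * ∑ k ∈ Finset.range n, (z - x k)⁻¹‖) ''
          Metric.closedBall (0 : ℂ) r)) ^ 2
      ≤ (2 * Real.pi)⁻¹ * ∫ θ in (0:ℝ)..(2*Real.pi), (s / (s - r)) *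
          (‖(Real.sqrt n : ℂ)⁻¹ *
            ∑ k ∈ Finset.range n, ((circleMap 0 s θ) - x k)⁻¹‖)^2 := by
  set F : ℂ → ℂ := fun z =>
    (Real.sqrt n : ℂ)⁻¹ * ∑ k ∈ Finset.range n, (z - x k)⁻¹ with hFdef
  have hne : ∀ z : ℂ, ‖z‖ < 1 → ∀ k, z - x k ≠ 0 := by
    intro z hz k h
    rw [sub_eq_zero] at h
    rw [h, hx k] at hz
    exact absurd hz (lt_irrefl _)
  have hF : DifferentiableOn ℂ F (ball 0 1) := by
    refine DifferentiableOn.const_mul ?_ _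
    refine DifferentiableOn.fun_sum fun k _ => ?_
    refine DifferentiableOn.inv (differentiableOn_id.sub (differentiableOn_const _)) ?_
    intro z hz
    exact hne z (by simpa [mem_ball_zero_iff] using hz) k
  have hFc : ContinuousOn F (closedBall 0 s) :=
    hF.continuousOn.mono (closedBall_subset_ball hs)
  -- maximum point on the closed ball of radius r
  have hcb : Metric.closedBall (0:ℂ) r ⊆ ball (0:ℂ) s := closedBall_subset_ball hrs
  have hconts : ContinuousOn (fun z => ‖F z‖) (closedBall (0:ℂ) r) :=
    (continuous_norm.comp_continuousOn
      (hFc.mono (closedBall_subset_closedBall (le_of_lt hrs))))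
  obtain ⟨z₀, hz₀, hmax⟩ := (isCompact_closedBall (0:ℂ) r).exists_isMaxOn
    ⟨0, mem_closedBall_self hr.le⟩ hconts
  have hsup : sSup ((fun z => ‖F z‖) '' Metric.closedBall (0:ℂ) r)
      = ‖F z₀‖ := by
    refine IsGreatest.csSup_eq ⟨⟨z₀, hz₀, rfl⟩, ?_⟩
    rintro y ⟨z, hz, rfl⟩
    exact hmax hz
  rw [hsup]
  set G : ℂ → ℂ := fun z => (F z)^2 with hGdef
  have hG : DiffContOnCl ℂ G (ball 0 s) := by
    constructor
    · exact ((hF.mono (ball_subset_ball hs.le)).pow 2)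
    · exact (hFc.pow 2).mono closure_ball_subset_closedBall
  have hz₀s : z₀ ∈ ball (0:ℂ) s := hcb hz₀
  have hcauchy := hG.circleIntegral_sub_inv_smul hz₀s
  -- |F z₀|² = (2π)⁻¹ ‖∮‖
  have habs : (‖F z₀‖)^2 = (2 * Real.pi)⁻¹ *
      ‖∮ z in C((0:ℂ), s), (z - z₀)⁻¹ • G z‖ := by
    rw [hcauchy]
    have : ‖(2 * Real.pi * Complex.I : ℂ) • G z₀‖
        = (2 * Real.pi) * ‖G z₀‖ := by
      simp [map_mul, abs_of_pos Real.pi_pos]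
    rw [this, hGdef]
    simp only [norm_pow]
    rw [← mul_assoc, inv_mul_cancel₀ (by positivity), one_mul]
  rw [habs]
  have hnorm : ‖∮ z in C((0:ℂ), s), (z - z₀)⁻¹ • G z‖
      ≤ ∫ θ in (0:ℝ)..(2*Real.pi), (s / (s - r)) *
          (‖F (circleMap 0 s θ)‖)^2 := by
    rw [circleIntegral]
    refine le_trans (intervalIntegral.norm_integral_le_integral_norm
      (by positivity : (0:ℝ) ≤ 2 * Real.pi)) ?_
    refine intervalIntegral.integral_mono_on (by positivity) ?_ ?_ ?_
    · -- integrability of the norm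
      apply Continuous.intervalIntegrable
      refine (Continuous.norm ?_)
      refine Continuous.fun_smul ?_ ?_
      · have hder : (deriv (circleMap 0 s)) = fun θ => circleMap 0 s θ * Complex.I :=
          funext fun θ => deriv_circleMap 0 s θ
        rw [hder]
        exact (continuous_circleMap 0 s).mul continuous_const
      · refine Continuous.fun_smul (continuous_circleMap_inv hz₀s) ?_
        refine Continuous.pow ?_ 2
        refine continuous_const.mul ?_
        refine continuous_finset_sum _ fun k _ => ?_
        refine Continuous.inv₀ ((continuous_circleMap 0 s).sub continuous_const) ?_
        intro θ
        exact hne _ (by rw [norm_circleMap_zero, abs_of_pos (lt_trans hr hrs)]; exact hs) k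
    · apply Continuous.intervalIntegrable
      refine continuous_const.mul (Continuous.pow ?_ 2)
      refine continuous_norm.comp ?_
      refine continuous_const.mul ?_
      refine continuous_finset_sum _ fun k _ => ?_
      refine Continuous.inv₀ ((continuous_circleMap 0 s).sub continuous_const) ?_
      intro θ
      exact hne _ (by rw [norm_circleMap_zero, abs_of_pos (lt_trans hr hrs)]; exact hs) k
    · intro θ _
      have hsr : (0:ℝ) < s - r := by linarith
      have hrad : ‖circleMap 0 s θ‖ = s := by
        rw [norm_circleMap_zero, abs_of_pos (lt_trans hr hrs)]
      have hd : s - r ≤ ‖circleMap 0 s θ - z₀‖ := by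
        have h2 : ‖circleMap 0 s θ‖ - ‖z₀‖ ≤ ‖circleMap 0 s θ - z₀‖ := norm_sub_norm_le _ _
        have h3 : ‖z₀‖ ≤ r := by simpa using mem_closedBall_zero_iff.1 hz₀
        rw [hrad] at h2
        linarith
      rw [norm_smul, norm_smul]
      simp only [deriv_circleMap, norm_mul, Complex.norm_I, mul_one, hrad,
        norm_inv, norm_pow]
      rw [div_eq_mul_inv]
      rw [mul_assoc]
      have hGc : ‖G (circleMap 0 s θ)‖ = ‖F (circleMap 0 s θ)‖^2 := by
        rw [hGdef]; simp [norm_pow]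
      rw [hGc]
      refine mul_le_mul_of_nonneg_left ?_ (by linarith : (0:ℝ) ≤ s)
      refine mul_le_mul_of_nonneg_right ?_ (by positivity)
      exact inv_anti₀ hsr hd
  calc (2 * Real.pi)⁻¹ * ‖∮ z in C((0:ℂ), s), (z - z₀)⁻¹ • G z‖
      ≤ (2 * Real.pi)⁻¹ * ∫ θ in (0:ℝ)..(2*Real.pi), (s / (s - r)) *
          (‖F (circleMap 0 s θ)‖)^2 :=
        mul_le_mul_of_nonneg_left hnorm (by positivity)
    _ = _ := rfl

theorem statement17
    {Ω : Type*} [MeasurableSpace Ω] (P : Measure Ω) [IsProbabilityMeasure P]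
    (X : ℕ → Ω → ℂ) (hmeas : ∀ i, Measurable (X i))
    (hid : ∀ i, Measure.map (X i) P = unifCircle)
    (hindep : iIndepFun X P)
    (r s : ℝ) (hr : 0 < r) (hrs : r < s) (hs : s < 1) (n : ℕ) :
    ∫ ω, (sSup ((fun z : ℂ =>
        ‖(Real.sqrt n : ℂ)⁻¹ * ∑ k ∈ Finset.range n, (z - X k ω)⁻¹‖) ''
          Metric.closedBall (0 : ℂ) r)) ^ 2 ∂P ≤
      1 / ((s - r) ^ 2 * (1 - s) ^ 2) := by
  rcases Nat.eq_zero_or_pos n with rfl | hn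
  · simp only [Finset.range_zero, Finset.sum_empty, mul_zero, norm_zero]
    rw [Set.Nonempty.image_const ⟨0, mem_closedBall_self hr.le⟩, csSup_singleton]
    simp only [ne_eq, OfNat.ofNat_ne_zero, not_false_eq_true, zero_pow, integral_zero]
    positivity
  by_cases hfi : Integrable (fun ω => (sSup ((fun z : ℂ =>
      ‖(Real.sqrt n : ℂ)⁻¹ * ∑ k ∈ Finset.range n, (z - X k ω)⁻¹‖) ''
        Metric.closedBall (0 : ℂ) r)) ^ 2) P
  swap
  · rw [integral_undef hfi]; positivity
  have hspos : 0 < s := lt_trans hr hrs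
  have hsr : (0:ℝ) < s - r := by linarith
  have h1s : (0:ℝ) < 1 - s := by linarith
  set N : Set Ω := ⋃ k, X k ⁻¹' (sphere (0:ℂ) 1)ᶜ with hNdef
  have hNnull : P N = 0 := by
    refine measure_iUnion_null fun k => ?_
    rw [← Measure.map_apply (hmeas k) isClosed_sphere.measurableSet.compl, hid k]
    exact unifCircle_sphere_compl
  have hgood : ∀ ω, ω ∉ N → ∀ k, ‖X k ω‖ = 1 := by
    intro ω hω k
    by_contra h
    refine hω (Set.mem_iUnion.2 ⟨k, ?_⟩)
    simp only [Set.mem_preimage, Set.mem_compl_iff, mem_sphere_iff_norm, sub_zero]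
    simpa using h
  set ν : Measure ℝ := volume.restrict (Set.Ioc (0:ℝ) (2*Real.pi)) with hνdef
  set Hfun : Ω × ℝ → ℝ := fun p =>
    (‖(Real.sqrt n : ℂ)⁻¹ *
      ∑ k ∈ Finset.range n, (circleMap 0 s p.2 - X k p.1)⁻¹‖)^2 with hHdef
  have hHm : Measurable Hfun := by
    apply Measurable.pow_const
    apply continuous_norm.measurable.comp
    apply Measurable.const_mul
    apply Finset.measurable_sum
    intro k _
    exact (((measurable_circleMap 0 s).comp measurable_snd).sub
      ((hmeas k).comp measurable_fst)).inv
  set Mb : ℝ := ((n:ℝ) * (1 - s)⁻¹)^2 with hMbdef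
  have hbound : ∀ p : Ω × ℝ, p.1 ∉ N → ‖Hfun p‖ ≤ Mb := by
    intro p hp
    rw [Real.norm_eq_abs, abs_of_nonneg (by positivity)]
    have hterm : ∀ k, ‖(circleMap 0 s p.2 - X k p.1)⁻¹‖ ≤ (1 - s)⁻¹ := by
      intro k
      have hXk := hgood p.1 hp k
      have h2 : ‖X k p.1‖ - ‖circleMap 0 s p.2‖ ≤ ‖X k p.1 - circleMap 0 s p.2‖ :=
        norm_sub_norm_le _ _
      rw [norm_sub_rev] at h2
      rw [hXk, norm_circleMap_zero, abs_of_pos hspos] at h2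
      rw [norm_inv]
      exact inv_anti₀ h1s (by linarith)
    have hsum : ‖(Real.sqrt n : ℂ)⁻¹ *
        ∑ k ∈ Finset.range n, (circleMap 0 s p.2 - X k p.1)⁻¹‖ ≤ (n:ℝ) * (1 - s)⁻¹ := by
      rw [norm_mul]
      have h1 : ‖(Real.sqrt n : ℂ)⁻¹‖ ≤ 1 := by
        rw [norm_inv, Complex.norm_real, Real.norm_eq_abs, abs_of_nonneg (Real.sqrt_nonneg _)]
        have : (1:ℝ) ≤ Real.sqrt n := by
          rw [show (1:ℝ) = Real.sqrt 1 by simp]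
          exact Real.sqrt_le_sqrt (by exact_mod_cast hn)
        exact inv_le_one_of_one_le₀ this
      have h2 : ‖∑ k ∈ Finset.range n, (circleMap 0 s p.2 - X k p.1)⁻¹‖
          ≤ (n:ℝ) * (1 - s)⁻¹ := by
        refine le_trans (norm_sum_le _ _) ?_
        refine le_trans (Finset.sum_le_sum fun k _ => hterm k) ?_
        rw [Finset.sum_const, Finset.card_range, nsmul_eq_mul]
      calc ‖(Real.sqrt n : ℂ)⁻¹‖ * ‖∑ k ∈ Finset.range n, _‖
          ≤ 1 * ((n:ℝ) * (1 - s)⁻¹) := by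
            refine mul_le_mul h1 h2 (by positivity) (by norm_num)
        _ = (n:ℝ) * (1 - s)⁻¹ := one_mul _
    exact pow_le_pow_left₀ (by positivity) hsum 2
  have hprodnull : (P.prod ν) {p : Ω × ℝ | ¬ ‖Hfun p‖ ≤ Mb} = 0 := by
    refine measure_mono_null (fun p hp => ?_) (?_ : (P.prod ν) (N ×ˢ Set.univ) = 0)
    · simp only [Set.mem_setOf_eq] at hp
      by_contra hmem
      simp only [Set.mem_prod, Set.mem_univ, and_true] at hmem
      exact hp (hbound p hmem)
    · rw [Measure.prod_prod, hNnull, zero_mul]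
  have hHint : Integrable Hfun (P.prod ν) := by
    refine Integrable.mono' (integrable_const Mb) hHm.aestronglyMeasurable ?_
    rw [ae_iff]
    exact hprodnull
  have hh_int : Integrable (fun ω => ∫ θ, Hfun (ω, θ) ∂ν) P := hHint.integral_prod_left
  set K : ℝ := (2 * Real.pi)⁻¹ * (s / (s - r)) with hKdef
  have hpt : ∀ᵐ ω ∂P, (fun ω => (sSup ((fun z : ℂ =>
      ‖(Real.sqrt n : ℂ)⁻¹ * ∑ k ∈ Finset.range n, (z - X k ω)⁻¹‖) ''
        Metric.closedBall (0 : ℂ) r)) ^ 2) ω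
      ≤ (fun ω => K * ∫ θ, Hfun (ω, θ) ∂ν) ω := by
    filter_upwards [measure_eq_zero_iff_ae_notMem.1 hNnull] with ω hω
    have hb := cauchy_bound (fun k => X k ω) n (hgood ω hω) r s hr hrs hs
    rw [intervalIntegral.integral_const_mul, intervalIntegral.integral_of_le
      (by positivity)] at hb
    refine le_trans hb (le_of_eq ?_)
    rw [hKdef]
    ring
  have hmono := integral_mono_ae hfi (hh_int.const_mul K) hpt
  refine le_trans hmono ?_
  rw [integral_const_mul]
  have hswap : ∫ ω, ∫ θ, Hfun (ω, θ) ∂ν ∂P = ∫ θ, ∫ ω, Hfun (ω, θ) ∂P ∂ν :=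
    integral_integral_swap hHint
  rw [hswap]
  have hinner : ∀ θ : ℝ, ∫ ω, Hfun (ω, θ) ∂P = (1 - s^2)⁻¹ := by
    intro θ
    set w : ℂ := circleMap 0 s θ with hwdef
    have habsw : ‖w‖ = s := by rw [hwdef, norm_circleMap_zero, abs_of_pos hspos]
    have hw1 : ‖w‖ < 1 := by rw [habsw]; exact hs
    have hptw : ∀ ω, Hfun (ω, θ) = (n:ℝ)⁻¹ *
        (‖∑ k ∈ Finset.range n, (w - X k ω)⁻¹‖)^2 := by
      intro ω
      rw [hHdef]
      simp only
      rw [norm_mul, mul_pow, norm_inv, Complex.norm_real, Real.norm_eq_abs,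
        abs_of_nonneg (Real.sqrt_nonneg _), inv_pow, Real.sq_sqrt (by positivity)]
    rw [integral_congr_ae (Eventually.of_forall hptw), integral_const_mul,
      sum_moment P X hmeas hid hindep w hw1 n, habsw]
    have hn' : (n:ℝ) ≠ 0 := by exact_mod_cast hn.ne'
    field_simp
  rw [integral_congr_ae (Eventually.of_forall fun θ => hinner θ), integral_const]
  rw [hνdef, measureReal_def, Measure.restrict_apply_univ, Real.volume_Ioc, sub_zero,
    ENNReal.toReal_ofReal (by positivity), smul_eq_mul]
  -- final arithmetic
  have hpi := Real.pi_pos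
  have h1s2 : (0:ℝ) < 1 - s^2 := by nlinarith
  rw [hKdef]
  have key : (2 * Real.pi)⁻¹ * (s / (s - r)) * (2 * Real.pi * (1 - s ^ 2)⁻¹)
      = s / ((s - r) * (1 - s ^ 2)) := by
    field_simp
  rw [key, div_le_div_iff₀ (by positivity) (by positivity), one_mul]
  have hab1 : (s - r) * (1 - s) ≤ 1 := by nlinarith
  have h1s2' : 1 - s ^ 2 = (1 - s) * (1 + s) := by ring
  nlinarith [mul_pos hsr h1s, mul_pos (mul_pos hsr h1s) (mul_pos hsr h1s),
    mul_pos hspos (mul_pos hsr h1s)]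
end
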